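/- arXiv:2410.23977 — 5 statements merged into one kernel-verified Lean document; each statement's English description precedes it below -/
import Mathlib

section
/- Let μ be a unitary 2-design on the n-qubit Hilbert space, ρ a density operator with purity ℘ = tr(ρ²), and O a traceless Hermitian operator. Then E_{U∼μ}[(tr(U O U† ρ))²] = ((d℘ − 1)/(d(d² − 1)))·‖O‖₂², and likewise E_{U∼μ}[(tr(O U ρ U†))²] equals the same value. -/
open MeasureTheory Matrix
open scoped BigOperators ENNReal Real ComplexConjugate ComplexOrder

noncomputable section

namespace ThriftyShadow

/-- basis index set of the `n`-qubit Hilbert space -/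
abbrev Idx (n : ℕ) := Fin n → Fin 2

/-- linear operators on the `n`-qubit Hilbert space -/
abbrev Op (n : ℕ) := Matrix (Idx n) (Idx n) ℂ

/-- index set for the `t`-th tensor power -/
abbrev TIdx (n t : ℕ) := Fin t → Idx n

/-- operators on the `t`-th tensor power -/
abbrev TMat (n t : ℕ) := Matrix (TIdx n t) (TIdx n t) ℂ

/-- the dimension `d = 2^n`, as a real number -/
def dim (n : ℕ) : ℝ := 2 ^ n

/-- tensor product of a family of operators: `(⨂ i, f i) (x,y) = ∏ i, (f i) (x i) (y i)` -/
def tpow {n t : ℕ} (f : Fin t → Op n) : TMat n t :=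
  Matrix.of fun x y => ∏ i, f i (x i) (y i)

/-- the projector `|b⟩⟨b|` onto a computational basis state -/
def ket (n : ℕ) (b : Idx n) : Op n := Matrix.single b b 1

/-- `|φ⟩⟨φ|` for a vector `φ` -/
def ketbra {n : ℕ} (φ : Idx n → ℂ) : Op n := Matrix.vecMulVec φ (star φ)

/-- a density operator: positive semidefinite with unit trace -/
def IsDensity {n : ℕ} (ρ : Op n) : Prop := ρ.PosSemidef ∧ ρ.trace = 1

/-- squared Hilbert–Schmidt norm `tr(O²)` of a Hermitian operator -/
def hsNormSq {n : ℕ} (O : Op n) : ℝ := ((O * O).trace).re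

/-- purity `tr(ρ²)` -/
def purity {n : ℕ} (ρ : Op n) : ℝ := ((ρ * ρ).trace).re

/-- fidelity `⟨φ|ρ|φ⟩` -/
def fid {n : ℕ} (ρ : Op n) (φ : Idx n → ℂ) : ℝ := (star φ ⬝ᵥ ρ.mulVec φ).re

/-- the unitary group `U(d)` on the `n`-qubit Hilbert space -/
abbrev UG (n : ℕ) := Matrix.unitaryGroup (Idx n) ℂ

instance (n : ℕ) : MeasurableSpace (UG n) := borel _

/-- entries of the `t`-fold twirl `E_{U∼μ}[U^{⊗t} A (U†)^{⊗t}]` -/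
def twirlEntry {n t : ℕ} (μ : Measure (UG n)) (A : TMat n t) (i j : TIdx n t) : ℂ :=
  ∫ U : UG n,
    (((tpow fun _ => (U : Op n)) * A * (tpow fun _ => (U : Op n)ᴴ) : TMat n t)) i j ∂μ

/-- `ν` is the Haar probability measure on `U(d)`: the (unique) left-invariant
Borel probability measure -/
def IsHaar {n : ℕ} (ν : Measure (UG n)) : Prop :=
  IsProbabilityMeasure ν ∧ ∀ V : UG n, Measure.map (fun U => V * U) ν = ν

/-- `μ` is a unitary `t`-design: its `t`-fold twirl agrees with that of the
Haar measure `ν` -/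
def IsTDesign {n : ℕ} (t : ℕ) (μ ν : Measure (UG n)) : Prop :=
  ∀ A : TMat n t, ∀ i j, twirlEntry μ A i j = twirlEntry ν A i j

/-- the single-shot shadow-estimation variance `V(O,ρ)` of a unitary 2-design `μ` -/
def Vshadow {n : ℕ} (μ : Measure (UG n)) (O ρ : Op n) : ℝ :=
  ((∫ U : UG n, ∑ b : Idx n, (((dim n + 1 : ℝ) : ℂ))^2 *
      ((tpow fun _ : Fin 3 => (U : Op n)ᴴ * ket n b * (U : Op n)) * tpow ![ρ, O, O]).trace ∂μ)
    - ((O * ρ).trace)^2).re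

/-- the cross moment operator `Ω` of a unitary ensemble given by a measure `ω` on a
parameter space together with a (unitary-valued) map `f` into operators -/
def Omega {n : ℕ} {α : Type*} [MeasurableSpace α] (ω : Measure α) (f : α → Op n) : TMat n 4 :=
  Matrix.of fun i j =>
    ∑ a : Idx n, ∑ b : Idx n,
      ∫ x, (((tpow fun _ => (f x)ᴴ) * (tpow ![ket n a, ket n a, ket n b, ket n b])
              * (tpow fun _ => f x) : TMat n 4)) i j ∂ω

/-- the reuse variance `V*(O,ρ)` of the unitary ensemble `(ω, f)` -/
def Vstar {n : ℕ} {α : Type*} [MeasurableSpace α] (ω : Measure α) (f : α → Op n)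
    (O ρ : Op n) : ℝ :=
  ((((dim n + 1 : ℝ) : ℂ))^2 * (Omega ω f * tpow ![O, ρ, O, ρ]).trace
    - ((O * ρ).trace)^2).re

/-- `V*(O,ρ)` for an ensemble which is simply a measure on the unitary group -/
def VstarU {n : ℕ} (μ : Measure (UG n)) (O ρ : Op n) : ℝ :=
  Vstar μ (fun U => (U : Op n)) O ρ

/-- `V*(O) = sup_ρ V*(O,ρ)`, supremum over density operators -/
def VstarSup {n : ℕ} {α : Type*} [MeasurableSpace α] (ω : Measure α) (f : α → Op n)
    (O : Op n) : ℝ :=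
  sSup {v | ∃ ρ : Op n, IsDensity ρ ∧ v = Vstar ω f O ρ}

/-- the single-qubit Pauli matrices `I, X, Y, Z` -/
def pauli1 : Fin 4 → Matrix (Fin 2) (Fin 2) ℂ :=
  ![1, !![0, 1; 1, 0], !![0, -Complex.I; Complex.I, 0], !![1, 0; 0, -1]]

/-- index set for `n`-qubit Pauli operators -/
abbrev PIdx (n : ℕ) := Fin n → Fin 4

/-- the `n`-qubit Pauli operator labelled by `p` -/
def pauliOp (n : ℕ) (p : PIdx n) : Op n :=
  Matrix.of fun x y => ∏ i, pauli1 (p i) (x i) (y i)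

/-- the `n`-qubit Pauli group (Pauli operators with phases `i^k`) -/
def pauliGroup (n : ℕ) : Set (Op n) :=
  {A | ∃ (k : Fin 4) (p : PIdx n), A = Complex.I ^ (k : ℕ) • pauliOp n p}

/-- the Clifford group, as the set of unitaries normalizing the Pauli group -/
def cliffordSet (n : ℕ) : Set (UG n) :=
  {U | (fun A => (U : Op n) * A * (U : Op n)ᴴ) '' pauliGroup n = pauliGroup n}

/-- `μ` is the Haar probability measure of the Clifford group, viewed as a measure on
`U(d)`: it is supported on the Clifford group and left-invariant under it -/
def IsCliffordHaar {n : ℕ} (μ : Measure (UG n)) : Prop :=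
  μ (cliffordSet n) = 1 ∧ ∀ C ∈ cliffordSet n, Measure.map (fun U => C * U) μ = μ

/-- characteristic function `Ξ_A(P) = tr(A P)` (real part) -/
def XiC {n : ℕ} (A : Op n) (p : PIdx n) : ℝ := ((A * pauliOp n p).trace).re

/-- cross characteristic function `Ξ_{ρ,O}(P) = tr(ρP) tr(OP)` -/
def crossXi {n : ℕ} (ρ O : Op n) (p : PIdx n) : ℝ := XiC ρ p * XiC O p

/-- twisted cross characteristic function `Ξ̃_{ρ,O}(P) = tr(ρ P O P)` -/
def twistXi {n : ℕ} (ρ O : Op n) (p : PIdx n) : ℝ :=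
  ((ρ * pauliOp n p * O * pauliOp n p).trace).re

/-- the quantity `V_△(O,ρ)` -/
def Vtri {n : ℕ} (O ρ : Op n) : ℝ :=
  (dim n + 1) / (dim n * (dim n + 2)) *
    ((∑ p : PIdx n, (crossXi ρ O p)^2) + ∑ p : PIdx n, twistXi ρ O p * crossXi ρ O p)

/-- `V_△(O) = sup_ρ V_△(O,ρ)` over density operators -/
def VtriSup {n : ℕ} (O : Op n) : ℝ :=
  sSup {v | ∃ ρ : Op n, IsDensity ρ ∧ v = Vtri O ρ}

/-- the sum of the `d` largest entries of a vector indexed by Pauli labels -/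
def topdSum {n : ℕ} (g : PIdx n → ℝ) : ℝ :=
  sSup {x | ∃ S : Finset (PIdx n), S.card = 2 ^ n ∧ x = ∑ p ∈ S, g p}

/-- Pauli expectation value `⟨φ|P|φ⟩` of a pure state -/
def pExp {n : ℕ} (φ : Idx n → ℂ) (p : PIdx n) : ℝ :=
  (star φ ⬝ᵥ (pauliOp n p).mulVec φ).re

/-- stabilizer 2-Rényi entropy `M₂(φ)` of a pure state -/
def M2 {n : ℕ} (φ : Idx n → ℂ) : ℝ :=
  - Real.logb 2 ((dim n)⁻¹ * ∑ p : PIdx n, (pExp φ p)^4)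

/-- stabilizer 2-Rényi entropy `M̃₂(ρ)` of a (mixed) state -/
def M2mixed {n : ℕ} (ρ : Op n) : ℝ :=
  - Real.logb 2 ((∑ p : PIdx n, (XiC ρ p)^4) / (dim n * purity ρ))

/-- the T gate -/
def Tgate : Matrix (Fin 2) (Fin 2) ℂ :=
  !![1, 0; 0, Complex.exp (Complex.I * (Real.pi / 4))]

/-- the Hadamard gate -/
def Hgate : Matrix (Fin 2) (Fin 2) ℂ :=
  ((Real.sqrt 2 : ℂ))⁻¹ • !![1, 1; 1, -1]

/-- a single-qubit gate `A` applied in parallel to the last `k` qubits -/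
def layer (n k : ℕ) (A : Matrix (Fin 2) (Fin 2) ℂ) : Op n :=
  Matrix.of fun x y =>
    ∏ i : Fin n, (if (i : ℕ) < n - k then (1 : Matrix (Fin 2) (Fin 2) ℂ) else A) (x i) (y i)

/-- the interleaved Clifford–T circuit `U_l T̂_k U_{l-1} T̂_k ⋯ T̂_k U_0` -/
def circuit (n k : ℕ) : (l : ℕ) → (Fin (l + 1) → UG n) → Op n
  | 0 => fun Us => (Us 0 : Op n)
  | (l + 1) => fun Us =>
      (Us (Fin.last (l + 1)) : Op n) * layer n k Tgate * circuit n k l (fun i => Us i.castSucc)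


/-- the computational basis state `|0…0⟩` as a vector -/
def e0 (n : ℕ) : Idx n → ℂ := fun b => if b = (fun _ => (0 : Fin 2)) then 1 else 0

end ThriftyShadow

namespace SMAux
open ThriftyShadow

variable {n : ℕ}

def Smat (n : ℕ) : TMat n 2 := Matrix.of fun x y => if x 0 = y 1 ∧ x 1 = y 0 then 1 else 0

def kron {n : ℕ} (B C : Op n) : TMat n 2 := Matrix.of fun x y => B (x 0) (y 0) * C (x 1) (y 1)

lemma pair_eta (x : TIdx n 2) : ![x 0, x 1] = x := by
  funext i; fin_cases i <;> simp

def pairEquiv (n : ℕ) : (Idx n × Idx n) ≃ TIdx n 2 where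
  toFun p := ![p.1, p.2]
  invFun z := (z 0, z 1)
  left_inv p := by simp
  right_inv z := pair_eta z

lemma sumPair (F : TIdx n 2 → ℂ) : ∑ z, F z = ∑ a : Idx n, ∑ b : Idx n, F ![a, b] := by
  rw [← Equiv.sum_comp (pairEquiv n) F, Fintype.sum_prod_type]
  rfl

lemma tpow_pair (B C : Op n) : tpow ![B, C] = kron B C := by
  ext x y; simp [tpow, kron, Fin.prod_univ_two]

lemma tpow_const (B : Op n) : (tpow fun _ : Fin 2 => B) = kron B B := by
  ext x y; simp [tpow, kron, Fin.prod_univ_two]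

lemma kron_mul (B C B' C' : Op n) : kron B C * kron B' C' = kron (B * B') (C * C') := by
  ext x y
  simp only [Matrix.mul_apply, kron, Matrix.of_apply]
  rw [sumPair (fun z => B (x 0) (z 0) * C (x 1) (z 1) * (B' (z 0) (y 0) * C' (z 1) (y 1)))]
  rw [Finset.sum_mul_sum]
  refine Finset.sum_congr rfl fun a _ => Finset.sum_congr rfl fun b _ => ?_
  simp; ring


lemma funext_pair {x y : TIdx n 2} (h0 : x 0 = y 0) (h1 : x 1 = y 1) : x = y := by
  funext i; fin_cases i <;> assumption

lemma kron_one_one : (kron 1 1 : TMat n 2) = 1 := by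
  ext x y
  by_cases h0 : x 0 = y 0 <;> by_cases h1 : x 1 = y 1
  · have hxy : x = y := funext_pair h0 h1
    simp [kron, Matrix.one_apply, h0, h1, hxy]
  · have hxy : x ≠ y := fun h => h1 (by rw [h])
    simp [kron, Matrix.one_apply, h0, h1, hxy]
  · have hxy : x ≠ y := fun h => h0 (by rw [h])
    simp [kron, Matrix.one_apply, h0, h1, hxy]
  · have hxy : x ≠ y := fun h => h0 (by rw [h])
    simp [kron, Matrix.one_apply, h0, h1, hxy]

lemma kron_add_left (B B' C : Op n) : kron (B + B') C = kron B C + kron B' C := by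
  ext x y; simp [kron, add_mul]

lemma kron_add_right (B C C' : Op n) : kron B (C + C') = kron B C + kron B C' := by
  ext x y; simp [kron, mul_add]

lemma kron_smul_left (c : ℂ) (B C : Op n) : kron (c • B) C = c • kron B C := by
  ext x y; simp [kron]; ring

lemma kron_smul_right (c : ℂ) (B C : Op n) : kron B (c • C) = c • kron B C := by
  ext x y; simp [kron]; ring

lemma kron_zero_left (C : Op n) : kron 0 C = 0 := by
  ext x y; simp [kron]

lemma kron_conjTranspose (B C : Op n) : (kron B C)ᴴ = kron Bᴴ Cᴴ := by
  ext x y; simp [kron, Matrix.conjTranspose_apply, mul_comm]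

lemma trace_mul_sum {m : Type*} [Fintype m] (X Y : Matrix m m ℂ) :
    (X * Y).trace = ∑ i, ∑ j, X i j * Y j i := by
  simp [Matrix.trace, Matrix.diag, Matrix.mul_apply]

lemma trace_kron (B C : Op n) : (kron B C).trace = B.trace * C.trace := by
  simp only [Matrix.trace, Matrix.diag]
  rw [sumPair (fun z => kron B C z z), Finset.sum_mul_sum]
  refine Finset.sum_congr rfl fun a _ => Finset.sum_congr rfl fun b _ => ?_
  simp [kron]

lemma trace_kron_smat (B C : Op n) : (kron B C * Smat n).trace = (B * C).trace := by
  rw [trace_mul_sum, trace_mul_sum]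
  rw [sumPair (fun i => ∑ j, kron B C i j * Smat n j i)]
  refine Finset.sum_congr rfl fun a _ => Finset.sum_congr rfl fun b _ => ?_
  rw [sumPair (fun j => kron B C ![a,b] j * Smat n j ![a,b])]
  rw [Finset.sum_eq_single b]
  · rw [Finset.sum_eq_single a]
    · simp [kron, Smat]
    · intro d _ hd; simp [kron, Smat, hd]
    · simp
  · intro c _ hc
    have h2 : ∀ d : Idx n, kron B C ![a,b] ![c,d] * Smat n ![c,d] ![a,b] = 0 := by
      intro d; simp [kron, Smat, hc]
    simp [h2]
  · simp

lemma trace_smat_kron (B C : Op n) : (Smat n * kron B C).trace = (B * C).trace := by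
  rw [Matrix.trace_mul_comm, trace_kron_smat]

lemma smat_mul_smat : (Smat n * Smat n : TMat n 2) = 1 := by
  ext x y
  rw [Matrix.mul_apply, sumPair (fun z => Smat n x z * Smat n z y)]
  rw [Finset.sum_eq_single (x 1)]
  · rw [Finset.sum_eq_single (x 0)]
    · by_cases h0 : x 0 = y 0 <;> by_cases h1 : x 1 = y 1
      · have hxy : x = y := funext_pair h0 h1
        simp [Smat, Matrix.one_apply, h0, h1, hxy]
      · have hxy : x ≠ y := fun h => h1 (by rw [h])
        simp [Smat, Matrix.one_apply, h0, h1, hxy]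
      · have hxy : x ≠ y := fun h => h0 (by rw [h])
        simp [Smat, Matrix.one_apply, h0, h1, hxy]
      · have hxy : x ≠ y := fun h => h0 (by rw [h])
        simp [Smat, Matrix.one_apply, h0, h1, hxy]
    · intro d _ hd
      have h3 : ¬ (x 0 = d) := fun h => hd h.symm
      simp [Smat, h3]
    · simp
  · intro c _ hc
    have h3 : ¬ (x 1 = c) := fun h => hc h.symm
    have h2 : ∀ d : Idx n, Smat n x ![c,d] * Smat n ![c,d] y = 0 := by
      intro d; simp [Smat, h3]
    simp [h2]
  · simp

lemma smat_comm_kron (B : Op n) : Smat n * kron B B = kron B B * Smat n := by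
  ext x y
  rw [Matrix.mul_apply, Matrix.mul_apply,
    sumPair (fun z => Smat n x z * kron B B z y),
    sumPair (fun z => kron B B x z * Smat n z y)]
  trans (B (x 1) (y 0) * B (x 0) (y 1))
  · rw [Finset.sum_eq_single (x 1)]
    · rw [Finset.sum_eq_single (x 0)]
      · simp [Smat, kron]
      · intro d _ hd
        have h3 : ¬ (x 0 = d) := fun h => hd h.symm
        simp [Smat, h3]
      · simp
    · intro c _ hc
      have h3 : ¬ (x 1 = c) := fun h => hc h.symm
      have h2 : ∀ d : Idx n, Smat n x ![c,d] * kron B B ![c,d] y = 0 := by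
        intro d; simp [Smat, h3]
      simp [h2]
    · simp
  · symm
    rw [Finset.sum_eq_single (y 1)]
    · rw [Finset.sum_eq_single (y 0)]
      · simp [Smat, kron]; ring
      · intro d _ hd; simp [Smat, hd]
      · simp
    · intro c _ hc
      have h2 : ∀ d : Idx n, kron B B x ![c,d] * Smat n ![c,d] y = 0 := by
        intro d; simp [Smat, hc]
      simp [h2]
    · simp

lemma kron_zero_right (B : Op n) : kron B 0 = 0 := by
  ext x y; simp [kron]

lemma kron_sub_left (B B' C : Op n) : kron (B - B') C = kron B C - kron B' C := by
  ext x y; simp [kron, sub_mul]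

lemma kron_sub_right (B C C' : Op n) : kron B (C - C') = kron B C - kron B C' := by
  ext x y; simp [kron, mul_sub]

def Lk {n : ℕ} (B : Op n) : TMat n 2 := kron B 1 + kron 1 B

lemma Lk_add (B C : Op n) : Lk (B + C) = Lk B + Lk C := by
  simp only [Lk, kron_add_left, kron_add_right]; abel

lemma Lk_sub (B C : Op n) : Lk (B - C) = Lk B - Lk C := by
  simp only [Lk, kron_sub_left, kron_sub_right]; abel

lemma Lk_smul (c : ℂ) (B : Op n) : Lk (c • B) = c • Lk B := by
  simp only [Lk, kron_smul_left, kron_smul_right, smul_add]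

lemma Lk_zero : Lk (0 : Op n) = 0 := by
  simp [Lk, kron_zero_left, kron_zero_right]

lemma ketbra_apply (φ : Idx n → ℂ) (i j : Idx n) : ketbra φ i j = φ i * star (φ j) := by
  simp [ketbra, Matrix.vecMulVec_apply]

lemma ketbra_conjT (φ : Idx n → ℂ) : (ketbra φ)ᴴ = ketbra φ := by
  ext i j; simp [ketbra_apply, Matrix.conjTranspose_apply, mul_comm]

lemma ketbra_mul_self (φ : Idx n → ℂ) :
    ketbra φ * ketbra φ = (star φ ⬝ᵥ φ) • ketbra φ := by
  ext i j
  simp only [Matrix.mul_apply, ketbra_apply, Matrix.smul_apply, dotProduct,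
    smul_eq_mul, Pi.star_apply]
  rw [Finset.sum_mul]
  refine Finset.sum_congr rfl fun k _ => by ring

lemma reflection_unitary (φ : Idx n → ℂ) (c : ℂ)
    (hc : c + star c + c * star c * (star φ ⬝ᵥ φ) = 0) :
    (1 + c • ketbra φ) ∈ Matrix.unitaryGroup (Idx n) ℂ := by
  rw [Matrix.mem_unitaryGroup_iff, Matrix.star_eq_conjTranspose]
  have hct : (1 + c • ketbra φ)ᴴ = 1 + star c • ketbra φ := by
    simp [Matrix.conjTranspose_add, Matrix.conjTranspose_smul, ketbra_conjT]
  rw [hct]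
  have key : ((1 : Op n) + c • ketbra φ) * (1 + star c • ketbra φ)
      = 1 + (c + star c + c * star c * (star φ ⬝ᵥ φ)) • ketbra φ := by
    rw [mul_add, mul_one, add_mul, one_mul, Matrix.smul_mul, Matrix.mul_smul, smul_smul,
      ketbra_mul_self, smul_smul, add_smul, add_smul]
    abel
  rw [key, hc, zero_smul, add_zero]

lemma star_dot_self (φ : Idx n → ℂ) : star (star φ ⬝ᵥ φ) = star φ ⬝ᵥ φ := by
  simp only [dotProduct, Pi.star_apply, star_sum, star_mul', star_star]
  exact Finset.sum_congr rfl fun k _ => by ring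

lemma comm_ketbra {M : TMat n 2}
    (hM : ∀ V : UG n, kron (V : Op n) (V : Op n) * M = M * kron (V : Op n) (V : Op n))
    (φ : Idx n → ℂ) : Lk (ketbra φ) * M = M * Lk (ketbra φ) := by
  by_cases hφ : φ = 0
  · subst hφ
    have h0 : ketbra (0 : Idx n → ℂ) = 0 := by ext i j; simp [ketbra_apply]
    simp [h0, Lk_zero]
  set s : ℂ := star φ ⬝ᵥ φ with hs
  have hs0 : s ≠ 0 := fun h => hφ (dotProduct_star_self_eq_zero.1 h)
  set L : TMat n 2 := Lk (ketbra φ) with hL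
  set Q : TMat n 2 := kron (ketbra φ) (ketbra φ) with hQ
  set X : TMat n 2 := L * M - M * L with hX
  set Y : TMat n 2 := Q * M - M * Q with hY
  have main : ∀ c : ℂ, c + star c + c * star c * s = 0 →
      c • X + (c * c) • Y = 0 := by
    intro c hc
    have hV := hM ⟨1 + c • ketbra φ, reflection_unitary φ c hc⟩
    have hk : kron ((1 : Op n) + c • ketbra φ) ((1 : Op n) + c • ketbra φ)
        = 1 + c • L + (c * c) • Q := by
      rw [kron_add_left, kron_add_right, kron_add_right, kron_smul_left, kron_smul_right,
        kron_smul_left, kron_smul_right, kron_one_one, smul_smul, hL, Lk, hQ, smul_add]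
      abel
    have hV' : (1 + c • L + (c * c) • Q) * M = M * (1 + c • L + (c * c) • Q) := by
      rw [← hk]; exact hV
    calc c • X + (c * c) • Y
        = (1 + c • L + (c * c) • Q) * M - M * (1 + c • L + (c * c) • Q) := by
          simp only [hX, hY, add_mul, mul_add, one_mul, mul_one, Matrix.smul_mul,
            Matrix.mul_smul, smul_sub]
          abel
      _ = 0 := by rw [hV']; exact sub_self _
  have hsst : star s = s := star_dot_self φ
  have h1 := main (-2 / s) (by
    rw [star_div₀, hsst]
    have h2s : star (-2 : ℂ) = -2 := by simp
    rw [h2s]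
    field_simp
    ring)
  have h2 := main ((Complex.I - 1) / s) (by
    rw [star_div₀, hsst]
    have : star (Complex.I - 1) = -Complex.I - 1 := by
      simp [star_sub, Complex.star_def, Complex.conj_I]
    rw [this]
    field_simp
    ring_nf
    simp [Complex.I_sq]
    try ring)
  have hc1 : (-2 / s : ℂ) ≠ 0 := by
    simp [div_eq_zero_iff, hs0]
  have hc2 : ((Complex.I - 1) / s : ℂ) ≠ 0 := by
    rw [div_ne_zero_iff]
    refine ⟨?_, hs0⟩
    intro h
    have := congrArg Complex.re h
    simp at this
  have hXY : ∀ c : ℂ, c ≠ 0 → c • X + (c * c) • Y = 0 → X = -(c • Y) := by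
    intro c hc0 h
    have hcx : c • X = -((c * c) • Y) := by rwa [add_eq_zero_iff_eq_neg] at h
    have hinv : X = c⁻¹ • (c • X) := (inv_smul_smul₀ hc0 X).symm
    rw [hinv, hcx, smul_neg, smul_smul, inv_mul_cancel_left₀ hc0]
  have e1 : X = -((-2 / s) • Y) := hXY _ hc1 h1
  have e2 : X = -(((Complex.I - 1) / s) • Y) := hXY _ hc2 h2
  have hsub : ((-2 / s) - (Complex.I - 1) / s) • Y = 0 := by
    have h' : (-2 / s) • Y = ((Complex.I - 1) / s) • Y := neg_inj.1 (e1.symm.trans e2)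
    rw [sub_smul, h', sub_self]
  have hY0 : Y = 0 := by
    rcases smul_eq_zero.1 hsub with h | h
    · exfalso
      rw [div_sub_div_same] at h
      rw [div_eq_zero_iff] at h
      rcases h with h | h
      · have := congrArg Complex.re h
        simp at this
        norm_num at this
      · exact hs0 h
    · exact h
  have hX0 : X = 0 := by rw [e1, hY0, smul_zero, neg_zero]
  have := sub_eq_zero.1 hX0
  exact this

lemma polar (χ ψ : Idx n → ℂ) :
    Matrix.vecMulVec χ (star ψ) = (4:ℂ)⁻¹ •
      (ketbra (ψ + χ) - ketbra (ψ - χ) - Complex.I • ketbra (ψ + Complex.I • χ)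
        + Complex.I • ketbra (ψ - Complex.I • χ)) := by
  ext i j
  simp only [Matrix.vecMulVec_apply, Matrix.smul_apply, Matrix.add_apply, Matrix.sub_apply,
    ketbra_apply, Pi.add_apply, Pi.sub_apply, Pi.smul_apply, smul_eq_mul, star_add, star_sub,
    star_mul', Pi.star_apply, Complex.star_def, Complex.conj_I, map_add, map_sub, _root_.map_mul,
    Complex.conj_conj]
  ring_nf
  simp only [Complex.I_sq]
  ring

lemma matrix_decomp (B : Op n) :
    B = ∑ a : Idx n, ∑ b : Idx n,
        B a b • Matrix.vecMulVec (Pi.single a 1) (star (Pi.single b (1:ℂ))) := by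
  ext i j
  rw [Matrix.sum_apply]
  simp only [Matrix.sum_apply, Matrix.smul_apply, Matrix.vecMulVec_apply, Pi.star_apply,
    Pi.single_apply, smul_eq_mul]
  rw [Finset.sum_eq_single i]
  · rw [Finset.sum_eq_single j]
    · simp
    · intro d _ hd
      have hjd : ¬ (j = d) := fun h => hd h.symm
      simp [hjd]
    · simp
  · intro c _ hc
    have hic : ¬ (i = c) := fun h => hc h.symm
    simp [hic]
  · simp

lemma comm_all {M : TMat n 2}
    (h : ∀ φ : Idx n → ℂ, Lk (ketbra φ) * M = M * Lk (ketbra φ)) (B : Op n) :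
    Lk B * M = M * Lk B := by
  have hsmul : ∀ (c : ℂ) (B : Op n), Lk B * M = M * Lk B → Lk (c • B) * M = M * Lk (c • B) := by
    intro c B hB
    rw [Lk_smul, Matrix.smul_mul, Matrix.mul_smul, hB]
  have hadd : ∀ B C : Op n, Lk B * M = M * Lk B → Lk C * M = M * Lk C →
      Lk (B + C) * M = M * Lk (B + C) := by
    intro B C hB hC
    rw [Lk_add, add_mul, mul_add, hB, hC]
  have hsub : ∀ B C : Op n, Lk B * M = M * Lk B → Lk C * M = M * Lk C →
      Lk (B - C) * M = M * Lk (B - C) := by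
    intro B C hB hC
    rw [Lk_sub, sub_mul, mul_sub, hB, hC]
  have hzero : Lk (0 : Op n) * M = M * Lk 0 := by rw [Lk_zero, zero_mul, mul_zero]
  have hrank : ∀ χ ψ : Idx n → ℂ,
      Lk (Matrix.vecMulVec χ (star ψ)) * M = M * Lk (Matrix.vecMulVec χ (star ψ)) := by
    intro χ ψ
    rw [polar]
    exact hsmul _ _ (hadd _ _ (hsub _ _ (hsub _ _ (h _) (h _)) (hsmul _ _ (h _)))
      (hsmul _ _ (h _)))
  rw [matrix_decomp B]
  refine Finset.sum_induction _ (fun A => Lk A * M = M * Lk A) (fun a b ha hb => hadd a b ha hb) hzero ?_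
  intro a _
  refine Finset.sum_induction _ (fun A => Lk A * M = M * Lk A) (fun a b ha hb => hadd a b ha hb) hzero ?_
  intro b _
  exact hsmul _ _ (hrank _ _)

lemma comm_sym {M : TMat n 2} (h : ∀ B : Op n, Lk B * M = M * Lk B) (B C : Op n) :
    (kron B C + kron C B) * M = M * (kron B C + kron C B) := by
  have key : kron B C + kron C B = Lk B * Lk C - Lk (B * C) := by
    simp only [Lk, add_mul, mul_add, kron_mul, mul_one, one_mul]
    abel
  rw [key, sub_mul, mul_sub, h (B * C)]
  have h2 : Lk B * Lk C * M = M * (Lk B * Lk C) := by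
    rw [mul_assoc, h C, ← mul_assoc, h B, mul_assoc]
  rw [h2]

lemma commutant {M : TMat n 2} (i0 j0 : Idx n) (hij : i0 ≠ j0)
    (h : ∀ B C : Op n, (kron B C + kron C B) * M = M * (kron B C + kron C B)) :
    M = (M ![i0,j0] ![i0,j0]) • 1 + (M ![i0,j0] ![j0,i0]) • Smat n := by
  ext x y
  set E1 : Op n := Matrix.of fun i j => if i = i0 ∧ j = x 0 then 1 else 0 with hE1
  set E2 : Op n := Matrix.of fun i j => if i = j0 ∧ j = x 1 then 1 else 0 with hE2
  have key := h E1 E2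
  have hK : ((kron E1 E2 + kron E2 E1) * M) ![i0,j0] y
      = (M * (kron E1 E2 + kron E2 E1)) ![i0,j0] y := by rw [key]
  have hLHS : ((kron E1 E2 + kron E2 E1) * M) ![i0,j0] y = M x y := by
    rw [Matrix.add_mul, Matrix.add_apply]
    have hz : (kron E2 E1 * M) ![i0,j0] y = 0 := by
      rw [Matrix.mul_apply]
      apply Finset.sum_eq_zero
      intro z _
      simp [kron, hE2, hij]
    rw [hz, add_zero, Matrix.mul_apply]
    rw [sumPair (fun z => kron E1 E2 ![i0,j0] z * M z y)]
    rw [Finset.sum_eq_single (x 0)]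
    · rw [Finset.sum_eq_single (x 1)]
      · have h1 : kron E1 E2 ![i0,j0] ![x 0, x 1] = 1 := by simp [kron, hE1, hE2]
        rw [h1, one_mul, pair_eta]
      · intro d _ hd; simp [kron, hE1, hE2, hd]
      · simp
    · intro c _ hc
      have hz2 : ∀ d, kron E1 E2 ![i0,j0] ![c,d] * M ![c,d] y = 0 := by
        intro d; simp [kron, hE1, hE2, hc]
      simp [hz2]
    · simp
  have hRHS : (M * (kron E1 E2 + kron E2 E1)) ![i0,j0] y
      = (if y 0 = x 0 ∧ y 1 = x 1 then M ![i0,j0] ![i0,j0] else 0)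
        + (if y 0 = x 1 ∧ y 1 = x 0 then M ![i0,j0] ![j0,i0] else 0) := by
    rw [Matrix.mul_add, Matrix.add_apply]
    congr 1
    · rw [Matrix.mul_apply, sumPair (fun z => M ![i0,j0] z * kron E1 E2 z y)]
      rw [Finset.sum_eq_single i0]
      · rw [Finset.sum_eq_single j0]
        · simp only [kron, hE1, hE2, Matrix.of_apply, Matrix.cons_val_zero, Matrix.cons_val_one,
            Matrix.head_cons, eq_self_iff_true, true_and, ite_and, mul_ite, mul_one, mul_zero]
          split_ifs <;> rfl
        · intro d _ hd; simp [kron, hE1, hE2, hd]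
        · simp
      · intro c _ hc
        have hz2 : ∀ d, M ![i0,j0] ![c,d] * kron E1 E2 ![c,d] y = 0 := by
          intro d; simp [kron, hE1, hE2, hc]
        simp [hz2]
      · simp
    · rw [Matrix.mul_apply, sumPair (fun z => M ![i0,j0] z * kron E2 E1 z y)]
      rw [Finset.sum_eq_single j0]
      · rw [Finset.sum_eq_single i0]
        · simp only [kron, hE1, hE2, Matrix.of_apply, Matrix.cons_val_zero, Matrix.cons_val_one,
            Matrix.head_cons, eq_self_iff_true, true_and, ite_and, mul_ite, mul_one, mul_zero]
          split_ifs <;> rfl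
        · intro d _ hd; simp [kron, hE1, hE2, hd]
        · simp
      · intro c _ hc
        have hz2 : ∀ d, M ![i0,j0] ![c,d] * kron E2 E1 ![c,d] y = 0 := by
          intro d; simp [kron, hE1, hE2, hc]
        simp [hz2]
      · simp
  have hfin := hLHS.symm.trans (hK.trans hRHS)
  rw [hfin]
  have c1 : (y 0 = x 0 ∧ y 1 = x 1) ↔ x = y :=
    ⟨fun ⟨h0, h1⟩ => funext_pair h0.symm h1.symm, fun h => ⟨by rw [h], by rw [h]⟩⟩
  have c2 : (y 0 = x 1 ∧ y 1 = x 0) ↔ (x 0 = y 1 ∧ x 1 = y 0) :=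
    ⟨fun ⟨h0, h1⟩ => ⟨h1.symm, h0.symm⟩, fun ⟨h0, h1⟩ => ⟨h1.symm, h0.symm⟩⟩
  simp only [Matrix.add_apply, Matrix.smul_apply, Matrix.one_apply, Smat, Matrix.of_apply,
    smul_eq_mul, mul_ite, mul_one, mul_zero]
  rw [if_congr c1 rfl rfl, if_congr c2 rfl rfl]

instance (n : ℕ) : BorelSpace (UG n) := ⟨rfl⟩

def Wmat {n : ℕ} (A : TMat n 2) (U : UG n) : TMat n 2 :=
  (tpow fun _ => (U : Op n)) * A * (tpow fun _ => (U : Op n)ᴴ)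

lemma Wmat_eq (A : TMat n 2) (U : UG n) :
    Wmat A U = kron (U : Op n) (U : Op n) * A * kron ((U : Op n)ᴴ) ((U : Op n)ᴴ) := by
  rw [Wmat, tpow_const, tpow_const]

lemma twirlEntry_eq (μ : Measure (UG n)) (A : TMat n 2) (i j : TIdx n 2) :
    twirlEntry μ A i j = ∫ U : UG n, Wmat A U i j ∂μ := rfl

lemma continuous_W (A : TMat n 2) : Continuous fun U : UG n => Wmat A U := by
  have hU : Continuous fun U : UG n => (U : Op n) := continuous_subtype_val
  have h1 : Continuous fun U : UG n => (tpow fun _ : Fin 2 => (U : Op n)) := by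
    apply continuous_matrix
    intro x y
    simp only [tpow, Matrix.of_apply]
    exact continuous_finset_prod _ fun i _ => hU.matrix_elem _ _
  have h2 : Continuous fun U : UG n => (tpow fun _ : Fin 2 => (U : Op n)ᴴ) := by
    apply continuous_matrix
    intro x y
    simp only [tpow, Matrix.of_apply]
    exact continuous_finset_prod _ fun i _ => hU.matrix_conjTranspose.matrix_elem _ _
  exact (h1.matrix_mul continuous_const).matrix_mul h2

lemma triple_apply {m : Type*} [Fintype m] (P A Q : Matrix m m ℂ) (i j : m) :
    (P * A * Q) i j = ∑ k, ∑ l, P i k * A k l * Q l j := by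
  simp only [Matrix.mul_apply, Finset.sum_mul]
  rw [Finset.sum_comm]

lemma entry_bound (U : UG n) (a b : Idx n) : ‖(U : Op n) a b‖ ≤ 1 :=
  entry_norm_bound_of_unitary U.2 a b

lemma entry_bound' (U : UG n) (a b : Idx n) : ‖(U : Op n)ᴴ a b‖ ≤ 1 := by
  have hmem : (U : Op n)ᴴ ∈ Matrix.unitaryGroup (Idx n) ℂ := by
    rw [← Matrix.star_eq_conjTranspose]
    exact Unitary.star_mem U.2
  exact entry_norm_bound_of_unitary hmem a b

lemma kron_entry_bound (U : UG n) (i k : TIdx n 2) :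
    ‖kron (U : Op n) (U : Op n) i k‖ ≤ 1 := by
  rw [kron, Matrix.of_apply, norm_mul]
  exact mul_le_one₀ (entry_bound U _ _) (norm_nonneg _) (entry_bound U _ _)

lemma kron_entry_bound' (U : UG n) (i k : TIdx n 2) :
    ‖kron ((U : Op n)ᴴ) ((U : Op n)ᴴ) i k‖ ≤ 1 := by
  rw [kron, Matrix.of_apply, norm_mul]
  exact mul_le_one₀ (entry_bound' U _ _) (norm_nonneg _) (entry_bound' U _ _)

lemma integrable_W (μ : Measure (UG n)) [IsFiniteMeasure μ] (A : TMat n 2) (i j : TIdx n 2) :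
    Integrable (fun U : UG n => Wmat A U i j) μ := by
  refine Integrable.mono' (integrable_const (∑ k : TIdx n 2, ∑ l : TIdx n 2, ‖A k l‖))
    (((continuous_W A).matrix_elem i j).aestronglyMeasurable) (ae_of_all _ fun U => ?_)
  rw [Wmat_eq, triple_apply]
  refine (norm_sum_le _ _).trans ?_
  refine Finset.sum_le_sum fun k _ => (norm_sum_le _ _).trans (Finset.sum_le_sum fun l _ => ?_)
  rw [norm_mul, norm_mul]
  calc ‖kron (U : Op n) (U : Op n) i k‖ * ‖A k l‖ * ‖kron ((U : Op n)ᴴ) ((U : Op n)ᴴ) l j‖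
      ≤ 1 * ‖A k l‖ * 1 := by
        gcongr
        · exact kron_entry_bound U i k
        · exact kron_entry_bound' U l j
    _ = ‖A k l‖ := by ring

lemma Wmat_mul (A : TMat n 2) (V U : UG n) :
    Wmat A (V * U)
      = kron (V : Op n) (V : Op n) * Wmat A U * kron ((V : Op n)ᴴ) ((V : Op n)ᴴ) := by
  rw [Wmat_eq, Wmat_eq]
  have hco : ((V * U : UG n) : Op n) = (V : Op n) * (U : Op n) := rfl
  rw [hco, Matrix.conjTranspose_mul, ← kron_mul, ← kron_mul]
  simp only [Matrix.mul_assoc]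

lemma Mnu_inv (ν : Measure (UG n)) (hν : IsHaar ν) (A : TMat n 2) (V : UG n) :
    (Matrix.of fun i j => twirlEntry ν A i j)
      = kron (V : Op n) (V : Op n) * (Matrix.of fun i j => twirlEntry ν A i j)
          * kron ((V : Op n)ᴴ) ((V : Op n)ᴴ) := by
  haveI := hν.1
  ext i j
  have hφ : Measurable fun U : UG n => V * U := by
    apply Continuous.measurable
    have h1 : Continuous fun U : UG n => (V : Op n) * (U : Op n) :=
      continuous_const.matrix_mul continuous_subtype_val
    exact h1.subtype_mk _
  have hint : ∀ k l, Integrable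
      (fun U : UG n => kron (V : Op n) (V : Op n) i k * Wmat A U k l
        * kron ((V : Op n)ᴴ) ((V : Op n)ᴴ) l j) ν :=
    fun k l => ((integrable_W ν A k l).const_mul _).mul_const _
  calc (Matrix.of fun i j => twirlEntry ν A i j) i j
      = ∫ U : UG n, Wmat A U i j ∂ν := rfl
    _ = ∫ U : UG n, Wmat A U i j ∂(Measure.map (fun U => V * U) ν) := by rw [hν.2 V]
    _ = ∫ U : UG n, Wmat A (V * U) i j ∂ν := by
        rw [integral_map hφ.aemeasurable ((continuous_W A).matrix_elem i j).aestronglyMeasurable]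
    _ = ∫ U : UG n, ∑ k, ∑ l, kron (V : Op n) (V : Op n) i k * Wmat A U k l
          * kron ((V : Op n)ᴴ) ((V : Op n)ᴴ) l j ∂ν := by
        simp only [Wmat_mul, triple_apply]
    _ = ∑ k, ∑ l, kron (V : Op n) (V : Op n) i k * (∫ U : UG n, Wmat A U k l ∂ν)
          * kron ((V : Op n)ᴴ) ((V : Op n)ᴴ) l j := by
        rw [integral_finset_sum _ (fun k _ => integrable_finset_sum _ (fun l _ => hint k l))]
        refine Finset.sum_congr rfl fun k _ => ?_
        rw [integral_finset_sum _ (fun l _ => hint k l)]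
        refine Finset.sum_congr rfl fun l _ => ?_
        rw [MeasureTheory.integral_mul_const, MeasureTheory.integral_const_mul]
    _ = (kron (V : Op n) (V : Op n) * (Matrix.of fun i j => twirlEntry ν A i j)
          * kron ((V : Op n)ᴴ) ((V : Op n)ᴴ)) i j := by
        rw [triple_apply]
        rfl

lemma unitary_hVU (V : UG n) : ((V : Op n)ᴴ) * (V : Op n) = 1 := by
  have := Matrix.UnitaryGroup.star_mul_self V
  rwa [Matrix.star_eq_conjTranspose] at this

lemma Mnu_comm (ν : Measure (UG n)) (hν : IsHaar ν) (A : TMat n 2) (V : UG n) :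
    kron (V : Op n) (V : Op n) * (Matrix.of fun i j => twirlEntry ν A i j)
      = (Matrix.of fun i j => twirlEntry ν A i j) * kron (V : Op n) (V : Op n) := by
  have hinv := Mnu_inv ν hν A V
  have key : (Matrix.of fun i j => twirlEntry ν A i j) * kron (V : Op n) (V : Op n)
      = kron (V : Op n) (V : Op n) * (Matrix.of fun i j => twirlEntry ν A i j) := by
    conv_lhs => rw [hinv]
    rw [Matrix.mul_assoc, kron_mul, unitary_hVU, kron_one_one, Matrix.mul_one]
  exact key.symm

lemma trace_conj (U : UG n) (B : TMat n 2) :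
    (kron (U : Op n) (U : Op n) * B * kron ((U : Op n)ᴴ) ((U : Op n)ᴴ)).trace = B.trace := by
  rw [Matrix.trace_mul_comm, ← Matrix.mul_assoc, kron_mul, unitary_hVU, kron_one_one, one_mul]

lemma Mnu_trace (ν : Measure (UG n)) (hν : IsHaar ν) (A : TMat n 2) :
    (Matrix.of fun i j => twirlEntry ν A i j).trace = A.trace := by
  haveI := hν.1
  have h1 : (Matrix.of fun i j => twirlEntry ν A i j).trace
      = ∫ U : UG n, ∑ i, Wmat A U i i ∂ν := by
    rw [integral_finset_sum _ (fun i _ => integrable_W ν A i i)]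
    rfl
  rw [h1]
  have h2 : ∀ U : UG n, ∑ i, Wmat A U i i = A.trace := by
    intro U
    have : ∑ i, Wmat A U i i = (Wmat A U).trace := rfl
    rw [this, Wmat_eq, trace_conj]
  rw [integral_congr_ae (ae_of_all _ h2), integral_const, probReal_univ]
  simp

lemma Mnu_trace_smat (ν : Measure (UG n)) (hν : IsHaar ν) (A : TMat n 2) :
    ((Matrix.of fun i j => twirlEntry ν A i j) * Smat n).trace = (A * Smat n).trace := by
  haveI := hν.1
  have h1 : ((Matrix.of fun i j => twirlEntry ν A i j) * Smat n).trace
      = ∫ U : UG n, ∑ i, ∑ j, Wmat A U i j * Smat n j i ∂ν := by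
    rw [trace_mul_sum]
    rw [integral_finset_sum _ (fun i _ => integrable_finset_sum _
      (fun j _ => (integrable_W ν A i j).mul_const _))]
    refine Finset.sum_congr rfl fun i _ => ?_
    rw [integral_finset_sum _ (fun j _ => (integrable_W ν A i j).mul_const _)]
    refine Finset.sum_congr rfl fun j _ => ?_
    rw [MeasureTheory.integral_mul_const]
    rfl
  rw [h1]
  have h2 : ∀ U : UG n, ∑ i, ∑ j, Wmat A U i j * Smat n j i = (A * Smat n).trace := by
    intro U
    rw [← trace_mul_sum]
    have h3 : Wmat A U * Smat n
        = kron (U : Op n) (U : Op n) * (A * Smat n) * kron ((U : Op n)ᴴ) ((U : Op n)ᴴ) := by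
      rw [Wmat_eq, Matrix.mul_assoc, Matrix.mul_assoc, ← smat_comm_kron, ← Matrix.mul_assoc,
        ← Matrix.mul_assoc, Matrix.mul_assoc (kron (U : Op n) (U : Op n))]
    rw [h3, trace_conj]
  rw [integral_congr_ae (ae_of_all _ h2), integral_const, probReal_univ]
  simp

lemma pairing (μ : Measure (UG n)) [IsProbabilityMeasure μ] (A R : TMat n 2) :
    ∫ U : UG n, ∑ i, ∑ j, Wmat A U i j * R j i ∂μ
      = ∑ i, ∑ j, twirlEntry μ A i j * R j i := by
  rw [integral_finset_sum _ (fun i _ => integrable_finset_sum _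
    (fun j _ => (integrable_W μ A i j).mul_const _))]
  refine Finset.sum_congr rfl fun i _ => ?_
  rw [integral_finset_sum _ (fun j _ => (integrable_W μ A i j).mul_const _)]
  refine Finset.sum_congr rfl fun j _ => ?_
  rw [MeasureTheory.integral_mul_const]
  rfl

lemma card_idx : (Fintype.card (Idx n) : ℂ) = (2:ℂ)^n := by
  simp [Fintype.card_fun]

lemma card_tidx : (Fintype.card (TIdx n 2) : ℂ) = ((2:ℂ)^n)^2 := by
  have : Fintype.card (TIdx n 2) = Fintype.card (Idx n) ^ 2 := by
    simp [Fintype.card_fun]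
  rw [this]
  push_cast
  rw [card_idx]

lemma trace_smat : (Smat n).trace = (2:ℂ)^n := by
  have h := trace_smat_kron (n := n) 1 1
  rw [kron_one_one, mul_one, one_mul, Matrix.trace_one] at h
  rw [h, card_idx]



lemma haar_structure (ν : Measure (UG n)) (hν : IsHaar ν) (A : TMat n 2)
    (i0 j0 : Idx n) (hij : i0 ≠ j0) :
    ∃ α β : ℂ,
      (∀ R : TMat n 2, ∑ i, ∑ j, twirlEntry ν A i j * R j i
          = α * R.trace + β * (Smat n * R).trace)
      ∧ α * ((2:ℂ)^n)^2 + β * (2:ℂ)^n = A.trace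
      ∧ α * (2:ℂ)^n + β * ((2:ℂ)^n)^2 = (A * Smat n).trace := by
  set Mn := Matrix.of fun i j => twirlEntry ν A i j with hMn
  have hcomm : ∀ V : UG n, kron (V : Op n) (V : Op n) * Mn = Mn * kron (V : Op n) (V : Op n) :=
    fun V => Mnu_comm ν hν A V
  have hMeq := commutant i0 j0 hij (comm_sym (comm_all (comm_ketbra hcomm)))
  refine ⟨Mn ![i0,j0] ![i0,j0], Mn ![i0,j0] ![j0,i0], ?_, ?_, ?_⟩
  · intro R
    have h1 : ∑ i, ∑ j, twirlEntry ν A i j * R j i = (Mn * R).trace := by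
      rw [trace_mul_sum]; rfl
    rw [h1]
    conv_lhs => rw [hMeq]
    rw [Matrix.add_mul, Matrix.smul_mul, Matrix.smul_mul, Matrix.one_mul,
      Matrix.trace_add, Matrix.trace_smul, Matrix.trace_smul, smul_eq_mul, smul_eq_mul]
  · have htr := Mnu_trace ν hν A
    rw [← hMn] at htr
    rw [← htr]
    conv_rhs => rw [hMeq]
    rw [Matrix.trace_add, Matrix.trace_smul, Matrix.trace_smul, Matrix.trace_one,
      trace_smat, smul_eq_mul, smul_eq_mul, card_tidx]
  · have htr := Mnu_trace_smat ν hν A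
    rw [← hMn] at htr
    rw [← htr]
    conv_rhs => rw [hMeq]
    rw [Matrix.add_mul, Matrix.smul_mul, Matrix.smul_mul, Matrix.one_mul, smat_mul_smat,
      Matrix.trace_add, Matrix.trace_smul, Matrix.trace_smul, Matrix.trace_one, trace_smat,
      smul_eq_mul, smul_eq_mul, card_tidx]

lemma trace_sq (P Q : Op n) :
    ((P * Q).trace)^2 = ∑ i, ∑ j, kron P P i j * kron Q Q j i := by
  rw [pow_two, trace_mul_sum, Finset.sum_mul_sum]
  conv_rhs => rw [sumPair (fun i => ∑ j, kron P P i j * kron Q Q j i)]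
  refine Finset.sum_congr rfl fun a _ => Finset.sum_congr rfl fun c _ => ?_
  rw [Finset.sum_mul_sum]
  conv_rhs => rw [sumPair (fun j => kron P P ![a,c] j * kron Q Q j ![a,c])]
  refine Finset.sum_congr rfl fun b _ => Finset.sum_congr rfl fun d _ => ?_
  simp only [kron, Matrix.of_apply, Matrix.cons_val_zero, Matrix.cons_val_one, Matrix.head_cons]
  ring

lemma herm_sq_trace_real {X : Op n} (hX : X.IsHermitian) :
    (X * X).trace = ((((X * X).trace).re : ℝ) : ℂ) := by
  have h : (X * X).trace = ((∑ i : Idx n, ∑ j : Idx n, Complex.normSq (X j i) : ℝ) : ℂ) := by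
    rw [trace_mul_sum]
    push_cast
    refine Finset.sum_congr rfl fun i _ => Finset.sum_congr rfl fun j _ => ?_
    have hx : X i j = star (X j i) := by
      conv_lhs => rw [← hX]
      rw [Matrix.conjTranspose_apply]
    rw [hx, Complex.star_def, mul_comm, Complex.mul_conj]
  rw [h]
  simp

end SMAux

open SMAux

theorem second_moment_two_design_aux : True := trivial



open ThriftyShadow

/-- the second moment of `tr(U O U† ρ)` for a unitary 2-design. -/
theorem second_moment_two_design (n : ℕ)
    (μ ν : Measure (UG n)) [IsProbabilityMeasure μ]
    (hν : IsHaar ν) (hμν : IsTDesign 2 μ ν)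
    (ρ O : Op n) (hρ : IsDensity ρ) (hO : O.IsHermitian) (hO0 : O.trace = 0) :
    (∫ U : UG n, (((U : Op n) * O * (U : Op n)ᴴ * ρ).trace) ^ 2 ∂μ
        = (((dim n * purity ρ - 1) / (dim n * ((dim n) ^ 2 - 1)) * hsNormSq O : ℝ) : ℂ))
    ∧ (∫ U : UG n, ((O * ((U : Op n) * ρ * (U : Op n)ᴴ)).trace) ^ 2 ∂μ
        = (((dim n * purity ρ - 1) / (dim n * ((dim n) ^ 2 - 1)) * hsNormSq O : ℝ) : ℂ)) := by
  classical
  by_cases hn0 : n = 0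
  · subst hn0
    have hO' : O = 0 := by
      ext i j
      have htr : O.trace = O i i := by
        have hi : (default : Idx 0) = i := Subsingleton.elim _ _
        simp [Matrix.trace, Matrix.diag, Fintype.sum_unique]
        exact congrArg₂ (fun a b => O a b) (Subsingleton.elim _ _) (Subsingleton.elim _ _)
      have hji : j = i := Subsingleton.elim _ _
      rw [hji]
      have hz : O i i = 0 := htr.symm.trans hO0
      simp [hz]
    have hNorm : hsNormSq O = 0 := by simp [hsNormSq, hO']
    have hz1 : ∀ U : UG 0, ((U : Op 0) * O * (U : Op 0)ᴴ * ρ).trace ^ 2 = 0 := by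
      intro U; rw [hO']; simp
    have hz2 : ∀ U : UG 0, ((O * ((U : Op 0) * ρ * (U : Op 0)ᴴ)).trace) ^ 2 = 0 := by
      intro U; rw [hO']; simp
    have hr : (((dim 0 * purity ρ - 1) / (dim 0 * ((dim 0) ^ 2 - 1)) * hsNormSq O : ℝ) : ℂ)
        = 0 := by
      rw [hNorm]; simp
    constructor
    · rw [integral_congr_ae (ae_of_all _ hz1), integral_zero, hr]
    · rw [integral_congr_ae (ae_of_all _ hz2), integral_zero, hr]
  · have hij : (fun _ => 0 : Idx n) ≠ (fun _ => 1 : Idx n) := by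
      intro h
      have h2 := congrFun h ⟨0, Nat.pos_of_ne_zero hn0⟩
      simp at h2
    have hd0 : ((2:ℂ)^n) ≠ 0 := pow_ne_zero _ two_ne_zero
    have hd1 : ((2:ℂ)^n)^2 - 1 ≠ 0 := by
      rw [sub_ne_zero]
      intro h
      have hcast : (((2^n)^2 : ℕ) : ℂ) = ((1:ℕ) : ℂ) := by push_cast; exact h
      have h4 := Nat.cast_injective hcast
      have h2n : 1 < 2^n := Nat.one_lt_two_pow_iff.2 hn0
      nlinarith
    have hdim : ((dim n : ℝ) : ℂ) = (2:ℂ)^n := by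
      show (((2:ℝ)^n : ℝ) : ℂ) = (2:ℂ)^n
      push_cast
      ring
    have hpc : (ρ * ρ).trace = ((purity ρ : ℝ) : ℂ) := herm_sq_trace_real hρ.1.1
    have hTc : (O * O).trace = ((hsNormSq O : ℝ) : ℂ) := herm_sq_trace_real hO
    have hRHS : (((dim n * purity ρ - 1) / (dim n * ((dim n)^2 - 1)) * hsNormSq O : ℝ) : ℂ)
        = ((2:ℂ)^n * ((purity ρ : ℝ) : ℂ) - 1) / ((2:ℂ)^n * (((2:ℂ)^n)^2 - 1))
            * ((hsNormSq O : ℝ) : ℂ) := by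
      push_cast
      rw [hdim]
    constructor
    · obtain ⟨α, β, hpair, heq1, heq2⟩ := haar_structure ν hν (kron O O) _ _ hij
      rw [trace_kron, hO0, zero_mul] at heq1
      rw [trace_kron_smat, hTc] at heq2
      have hint : ∫ U : UG n, ((U : Op n) * O * (U : Op n)ᴴ * ρ).trace ^ 2 ∂μ
          = ∑ i, ∑ j, twirlEntry μ (kron O O) i j * kron ρ ρ j i := by
        rw [← pairing μ (kron O O) (kron ρ ρ)]
        refine integral_congr_ae (ae_of_all _ fun U => ?_)
        have hW : Wmat (kron O O) U
            = kron ((U : Op n) * O * (U : Op n)ᴴ) ((U : Op n) * O * (U : Op n)ᴴ) := by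
          rw [Wmat_eq, kron_mul, kron_mul]
        beta_reduce
        rw [hW, ← trace_sq]
      have hdesign : ∑ i, ∑ j, twirlEntry μ (kron O O) i j * kron ρ ρ j i
          = ∑ i, ∑ j, twirlEntry ν (kron O O) i j * kron ρ ρ j i :=
        Finset.sum_congr rfl fun i _ => Finset.sum_congr rfl fun j _ => by
          rw [hμν (kron O O) i j]
      rw [hint, hdesign, hpair (kron ρ ρ), trace_kron, trace_smat_kron, hρ.2, one_mul, hpc,
        hRHS]
      field_simp
      linear_combination ((2:ℂ)^n - ((purity ρ : ℝ) : ℂ)) * heq1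
        + ((2:ℂ)^n * ((purity ρ : ℝ) : ℂ) - 1) * heq2
    · obtain ⟨α, β, hpair, heq1, heq2⟩ := haar_structure ν hν (kron ρ ρ) _ _ hij
      rw [trace_kron, hρ.2, one_mul] at heq1
      rw [trace_kron_smat, hpc] at heq2
      have hint : ∫ U : UG n, ((O * ((U : Op n) * ρ * (U : Op n)ᴴ)).trace) ^ 2 ∂μ
          = ∑ i, ∑ j, twirlEntry μ (kron ρ ρ) i j * kron O O j i := by
        rw [← pairing μ (kron ρ ρ) (kron O O)]
        refine integral_congr_ae (ae_of_all _ fun U => ?_)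
        have hW : Wmat (kron ρ ρ) U
            = kron ((U : Op n) * ρ * (U : Op n)ᴴ) ((U : Op n) * ρ * (U : Op n)ᴴ) := by
          rw [Wmat_eq, kron_mul, kron_mul]
        beta_reduce
        rw [Matrix.trace_mul_comm, hW, ← trace_sq]
      have hdesign : ∑ i, ∑ j, twirlEntry μ (kron ρ ρ) i j * kron O O j i
          = ∑ i, ∑ j, twirlEntry ν (kron ρ ρ) i j * kron O O j i :=
        Finset.sum_congr rfl fun i _ => Finset.sum_congr rfl fun j _ => by
          rw [hμν (kron ρ ρ) i j]
      rw [hint, hdesign, hpair (kron O O), trace_kron, trace_smat_kron, hO0, zero_mul,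
        mul_zero, zero_add, hTc, hRHS]
      field_simp
      linear_combination ((2:ℂ)^n * ((hsNormSq O : ℝ) : ℂ)) * heq2
        - ((hsNormSq O : ℝ) : ℂ) * heq1
end
end

section
/- Let O₁ and O₂ be Hermitian operators on the n-qubit Hilbert space. Then ‖Ξ̃_{O₁,O₂}‖₂² = ‖Ξ_{O₁,O₂}‖₂², that is, ∑_{P∈𝒫̄_n} (tr(O₁ P O₂ P))² = ∑_{P∈𝒫̄_n} (tr(O₁P))²(tr(O₂P))²; consequently |Ξ̃_{O₁,O₂}·Ξ_{O₁,O₂}| ≤ ‖Ξ_{O₁,O₂}‖₂². -/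
open MeasureTheory Matrix
open scoped BigOperators ENNReal Real ComplexConjugate ComplexOrder

noncomputable section

open ThriftyShadow

namespace TCCaux

lemma sum_pi_prod {n : ℕ} (g : Fin n → Fin 4 → ℂ) :
    ∑ p : Fin n → Fin 4, ∏ i, g i (p i) = ∏ i, ∑ a, g i a := by
  rw [Finset.prod_univ_sum, Fintype.piFinset_univ]

lemma pauli1_conj (a : Fin 4) (i j : Fin 2) : conj (pauli1 a i j) = pauli1 a j i := by
  fin_cases a <;> fin_cases i <;> fin_cases j <;> norm_num [pauli1]

lemma pauliOp_herm (n : ℕ) (p : PIdx n) : (pauliOp n p)ᴴ = pauliOp n p := by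
  ext x y
  simp only [conjTranspose_apply, pauliOp, of_apply]
  rw [show (star (∏ i : Fin n, pauli1 (p i) (y i) (x i)) : ℂ)
      = conj (∏ i : Fin n, pauli1 (p i) (y i) (x i)) from rfl, map_prod]
  exact Finset.prod_congr rfl fun i _ => pauli1_conj _ _ _

set_option maxHeartbeats 4000000 in
lemma key1 (a b c d e f g h : Fin 2) :
    ∑ x : Fin 4, pauli1 x a b * pauli1 x c d * pauli1 x e f * pauli1 x g h
    = ∑ x : Fin 4, pauli1 x a d * pauli1 x c b * pauli1 x e h * pauli1 x g f := by
  simp only [Fin.sum_univ_four]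
  simp only [show pauli1 2 = !![0, -Complex.I; Complex.I, 0] from rfl,
    show pauli1 3 = !![1, 0; 0, -1] from rfl]
  fin_cases a <;> fin_cases b <;> fin_cases c <;> fin_cases d <;> fin_cases e <;> fin_cases f <;>
    fin_cases g <;> fin_cases h <;>
  norm_num [pauli1]

lemma kernel_eq {n : ℕ} (w z y x w' z' y' x' : Idx n) :
    ∑ p : PIdx n,
        pauliOp n p w z * pauliOp n p y x * pauliOp n p w' z' * pauliOp n p y' x'
      = ∑ p : PIdx n,
        pauliOp n p w x * pauliOp n p y z * pauliOp n p w' x' * pauliOp n p y' z' := by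
  simp only [pauliOp, of_apply, ← Finset.prod_mul_distrib]
  rw [sum_pi_prod (fun i a => pauli1 a (w i) (z i) * pauli1 a (y i) (x i)
        * pauli1 a (w' i) (z' i) * pauli1 a (y' i) (x' i)),
      sum_pi_prod (fun i a => pauli1 a (w i) (x i) * pauli1 a (y i) (z i)
        * pauli1 a (w' i) (x' i) * pauli1 a (y' i) (z' i))]
  exact Finset.prod_congr rfl fun i _ => key1 _ _ _ _ _ _ _ _

lemma trace2 {m : Type*} [Fintype m] [DecidableEq m] (A B : Matrix m m ℂ) :
    (A * B).trace = ∑ v : m × m, A v.1 v.2 * B v.2 v.1 := by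
  rw [Fintype.sum_prod_type]
  simp [Matrix.trace, Matrix.mul_apply, Matrix.diag]

lemma trace4 {m : Type*} [Fintype m] [DecidableEq m] (A B C D : Matrix m m ℂ) :
    (A * B * C * D).trace
      = ∑ v : m × m × m × m,
          A v.1 v.2.2.2 * B v.2.2.2 v.2.2.1 * C v.2.2.1 v.2.1 * D v.2.1 v.1 := by
  simp only [Fintype.sum_prod_type]
  simp only [Matrix.trace, Matrix.mul_apply, Matrix.diag, Finset.sum_mul, Finset.mul_sum]

abbrev Q4 (n : ℕ) := Idx n × Idx n × Idx n × Idx n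

noncomputable def fK {n : ℕ} (O₁ O₂ : Op n) (v : Q4 n) (p : PIdx n) : ℂ :=
  O₁ v.1 v.2.2.2 * pauliOp n p v.2.2.2 v.2.2.1 * O₂ v.2.2.1 v.2.1 * pauliOp n p v.2.1 v.1

noncomputable def gK {n : ℕ} (O₁ O₂ : Op n) (v : Q4 n) (p : PIdx n) : ℂ :=
  O₁ v.1 v.2.1 * pauliOp n p v.2.1 v.1 * O₂ v.2.2.1 v.2.2.2 * pauliOp n p v.2.2.2 v.2.2.1

def sw {n : ℕ} (v : Q4 n) : Q4 n := (v.1, v.2.2.2, v.2.2.1, v.2.1)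

lemma sw_bij {n : ℕ} : Function.Bijective (sw (n := n)) :=
  Function.Involutive.bijective (fun _ => rfl)

lemma hf {n : ℕ} (O₁ O₂ : Op n) (p : PIdx n) :
    (O₁ * pauliOp n p * O₂ * pauliOp n p).trace = ∑ v : Q4 n, fK O₁ O₂ v p :=
  trace4 _ _ _ _

lemma hg {n : ℕ} (O₁ O₂ : Op n) (p : PIdx n) :
    ((O₁ * pauliOp n p).trace) * ((O₂ * pauliOp n p).trace) = ∑ v : Q4 n, gK O₁ O₂ v p := by
  rw [trace2, trace2, Finset.sum_mul_sum Finset.univ Finset.univ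
      (fun v : Idx n × Idx n => O₁ v.1 v.2 * pauliOp n p v.2 v.1)
      (fun v : Idx n × Idx n => O₂ v.1 v.2 * pauliOp n p v.2 v.1)]
  simp only [Fintype.sum_prod_type, gK]
  refine Finset.sum_congr rfl fun a _ => Finset.sum_congr rfl fun b _ =>
    Finset.sum_congr rfl fun c _ => Finset.sum_congr rfl fun d _ => ?_
  ring

lemma keystep {n : ℕ} (O₁ O₂ : Op n) (v v' : Q4 n) :
    ∑ p : PIdx n, fK O₁ O₂ v p * fK O₁ O₂ v' p
      = ∑ p : PIdx n, gK O₁ O₂ (sw v) p * gK O₁ O₂ (sw v') p := by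
  have h1 : ∀ p : PIdx n, fK O₁ O₂ v p * fK O₁ O₂ v' p
      = (O₁ v.1 v.2.2.2 * O₂ v.2.2.1 v.2.1 * O₁ v'.1 v'.2.2.2 * O₂ v'.2.2.1 v'.2.1)
        * (pauliOp n p v.2.2.2 v.2.2.1 * pauliOp n p v.2.1 v.1
          * pauliOp n p v'.2.2.2 v'.2.2.1 * pauliOp n p v'.2.1 v'.1) := by
    intro p; simp only [fK]; ring
  have h2 : ∀ p : PIdx n, gK O₁ O₂ (sw v) p * gK O₁ O₂ (sw v') p
      = (O₁ v.1 v.2.2.2 * O₂ v.2.2.1 v.2.1 * O₁ v'.1 v'.2.2.2 * O₂ v'.2.2.1 v'.2.1)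
        * (pauliOp n p v.2.2.2 v.1 * pauliOp n p v.2.1 v.2.2.1
          * pauliOp n p v'.2.2.2 v'.1 * pauliOp n p v'.2.1 v'.2.2.1) := by
    intro p; simp only [gK, sw]; ring
  simp only [h1, h2, ← Finset.mul_sum]
  rw [kernel_eq]

lemma sc3 {α β γ : Type*} [Fintype α] [Fintype β] [Fintype γ] (h : α → β → γ → ℂ) :
    ∑ a : α, ∑ b : β, ∑ c : γ, h a b c = ∑ c : γ, ∑ a : α, ∑ b : β, h a b c :=
  calc ∑ a : α, ∑ b : β, ∑ c : γ, h a b c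
      = ∑ a : α, ∑ c : γ, ∑ b : β, h a b c :=
        Finset.sum_congr rfl fun _ _ => Finset.sum_comm
    _ = ∑ c : γ, ∑ a : α, ∑ b : β, h a b c := Finset.sum_comm

lemma partA {n : ℕ} (O₁ O₂ : Op n) :
    ∑ p : PIdx n, ((O₁ * pauliOp n p * O₂ * pauliOp n p).trace) ^ 2
      = ∑ p : PIdx n, ((O₁ * pauliOp n p).trace) ^ 2 * ((O₂ * pauliOp n p).trace) ^ 2 := by
  calc ∑ p : PIdx n, ((O₁ * pauliOp n p * O₂ * pauliOp n p).trace) ^ 2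
      = ∑ p : PIdx n, ∑ v : Q4 n, ∑ v' : Q4 n, fK O₁ O₂ v p * fK O₁ O₂ v' p := by
        refine Finset.sum_congr rfl fun p _ => ?_
        rw [hf, sq, Finset.sum_mul_sum Finset.univ Finset.univ (fK O₁ O₂ · p) (fK O₁ O₂ · p)]
    _ = ∑ v : Q4 n, ∑ v' : Q4 n, ∑ p : PIdx n, fK O₁ O₂ v p * fK O₁ O₂ v' p :=
        (sc3 fun v v' p => fK O₁ O₂ v p * fK O₁ O₂ v' p).symm
    _ = ∑ v : Q4 n, ∑ v' : Q4 n, ∑ p : PIdx n, gK O₁ O₂ v p * gK O₁ O₂ v' p := by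
        simp only [keystep]
        refine Fintype.sum_bijective sw sw_bij _ _ (fun v => ?_)
        exact Fintype.sum_bijective sw sw_bij _ _ (fun v' => rfl)
    _ = ∑ p : PIdx n, ∑ v : Q4 n, ∑ v' : Q4 n, gK O₁ O₂ v p * gK O₁ O₂ v' p :=
        sc3 fun v v' p => gK O₁ O₂ v p * gK O₁ O₂ v' p
    _ = ∑ p : PIdx n, ((O₁ * pauliOp n p).trace) ^ 2 * ((O₂ * pauliOp n p).trace) ^ 2 := by
        refine Finset.sum_congr rfl fun p _ => ?_
        rw [← mul_pow, hg, sq, Finset.sum_mul_sum Finset.univ Finset.univ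
          (gK O₁ O₂ · p) (gK O₁ O₂ · p)]

lemma trace_real1 {n : ℕ} (O : Op n) (hO : O.IsHermitian) (p : PIdx n) :
    ((((O * pauliOp n p).trace).re : ℂ)) = (O * pauliOp n p).trace := by
  rw [← Complex.conj_eq_iff_re]
  calc conj ((O * pauliOp n p).trace) = ((O * pauliOp n p)ᴴ).trace := by
        rw [Matrix.trace_conjTranspose]; rfl
    _ = (O * pauliOp n p).trace := by
        rw [Matrix.conjTranspose_mul, pauliOp_herm, hO.eq, Matrix.trace_mul_comm]

lemma trace_real2 {n : ℕ} (O₁ O₂ : Op n) (h₁ : O₁.IsHermitian) (h₂ : O₂.IsHermitian)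
    (p : PIdx n) :
    ((((O₁ * pauliOp n p * O₂ * pauliOp n p).trace).re : ℂ))
      = (O₁ * pauliOp n p * O₂ * pauliOp n p).trace := by
  rw [← Complex.conj_eq_iff_re]
  calc conj ((O₁ * pauliOp n p * O₂ * pauliOp n p).trace)
      = ((O₁ * pauliOp n p * O₂ * pauliOp n p)ᴴ).trace := by
        rw [Matrix.trace_conjTranspose]; rfl
    _ = ((pauliOp n p * O₂ * pauliOp n p) * O₁).trace := by
        simp only [Matrix.conjTranspose_mul, pauliOp_herm, h₁.eq, h₂.eq, mul_assoc]
    _ = (O₁ * pauliOp n p * O₂ * pauliOp n p).trace := by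
        rw [Matrix.trace_mul_comm]
        simp only [mul_assoc]

end TCCaux

open TCCaux in

/-- the twisted cross characteristic function has the same 2-norm as the
cross characteristic function. -/
theorem twisted_cross_char_norm (n : ℕ) (O₁ O₂ : Op n)
    (h₁ : O₁.IsHermitian) (h₂ : O₂.IsHermitian) :
    (∑ p : PIdx n, ((O₁ * pauliOp n p * O₂ * pauliOp n p).trace) ^ 2
        = ∑ p : PIdx n, ((O₁ * pauliOp n p).trace) ^ 2 * ((O₂ * pauliOp n p).trace) ^ 2)
    ∧ |∑ p : PIdx n, twistXi O₁ O₂ p * crossXi O₁ O₂ p|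
        ≤ ∑ p : PIdx n, (crossXi O₁ O₂ p) ^ 2 := by
  refine ⟨partA O₁ O₂, ?_⟩
  have E : ∑ p : PIdx n, (twistXi O₁ O₂ p) ^ 2 = ∑ p : PIdx n, (crossXi O₁ O₂ p) ^ 2 := by
    apply Complex.ofReal_injective
    push_cast
    calc ∑ p : PIdx n, ((twistXi O₁ O₂ p : ℝ) : ℂ) ^ 2
        = ∑ p : PIdx n, ((O₁ * pauliOp n p * O₂ * pauliOp n p).trace) ^ 2 := by
          refine Finset.sum_congr rfl fun p _ => ?_
          rw [twistXi, trace_real2 O₁ O₂ h₁ h₂]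
      _ = ∑ p : PIdx n, ((O₁ * pauliOp n p).trace) ^ 2 * ((O₂ * pauliOp n p).trace) ^ 2 :=
          partA O₁ O₂
      _ = ∑ p : PIdx n, ((crossXi O₁ O₂ p : ℝ) : ℂ) ^ 2 := by
          refine Finset.sum_congr rfl fun p _ => ?_
          rw [crossXi, XiC, XiC]
          push_cast
          rw [trace_real1 O₁ h₁, trace_real1 O₂ h₂, mul_pow]
  have hCnn : 0 ≤ ∑ p : PIdx n, (crossXi O₁ O₂ p) ^ 2 :=
    Finset.sum_nonneg fun p _ => sq_nonneg _
  have h2 : (∑ p : PIdx n, twistXi O₁ O₂ p * crossXi O₁ O₂ p) ^ 2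
      ≤ (∑ p : PIdx n, (crossXi O₁ O₂ p) ^ 2) ^ 2 := by
    calc (∑ p : PIdx n, twistXi O₁ O₂ p * crossXi O₁ O₂ p) ^ 2
        ≤ (∑ p : PIdx n, (twistXi O₁ O₂ p) ^ 2) * ∑ p : PIdx n, (crossXi O₁ O₂ p) ^ 2 :=
          Finset.sum_mul_sq_le_sq_mul_sq _ _ _
      _ = (∑ p : PIdx n, (crossXi O₁ O₂ p) ^ 2) ^ 2 := by rw [E, sq]
  rw [← Real.sqrt_sq_eq_abs]
  calc Real.sqrt ((∑ p : PIdx n, twistXi O₁ O₂ p * crossXi O₁ O₂ p) ^ 2)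
      ≤ Real.sqrt ((∑ p : PIdx n, (crossXi O₁ O₂ p) ^ 2) ^ 2) := Real.sqrt_le_sqrt h2
    _ = ∑ p : PIdx n, (crossXi O₁ O₂ p) ^ 2 := Real.sqrt_sq hCnn
end
end

section
/- Let ρ be a density operator and O a traceless Hermitian operator on the n-qubit Hilbert space. Then |Ξ̃_{ρ,O}·Ξ_{ρ,O}| ≤ ‖Ξ̃_{ρ,O}‖₂² = ‖Ξ_{ρ,O}‖₂² ≤ ‖Ξ_O²‖_{[d]} ≤ ‖Ξ_O‖₂² = d‖O‖₂². -/
open MeasureTheory Matrix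
open scoped BigOperators ENNReal Real ComplexConjugate ComplexOrder

noncomputable section

open ThriftyShadow

namespace CrossChainAux

open ThriftyShadow Finset

lemma pauli1_complete (i j k l : Fin 2) :
    ∑ a : Fin 4, pauli1 a i j * pauli1 a k l = if i = l ∧ j = k then 2 else 0 := by
  fin_cases i <;> fin_cases j <;> fin_cases k <;> fin_cases l <;>
    simp [pauli1, Fin.sum_univ_four, Matrix.one_apply, Complex.ext_iff] <;> norm_num

lemma pauli1_conj (a : Fin 4) (i j : Fin 2) :
    (starRingEnd ℂ) (pauli1 a i j) = pauli1 a j i := by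
  fin_cases a <;> fin_cases i <;> fin_cases j <;>
    simp [pauli1, Matrix.one_apply, Complex.ext_iff]

lemma pauli1_mul_self (a : Fin 4) : pauli1 a * pauli1 a = 1 := by
  fin_cases a <;> ext i j <;> fin_cases i <;> fin_cases j <;>
    simp [pauli1, Matrix.mul_apply, Fin.sum_univ_two, Matrix.one_apply, Complex.ext_iff] <;>
    norm_num

def chi1 (a b : Fin 4) : ℝ := if a = 0 ∨ b = 0 ∨ a = b then 1 else -1

lemma pauli1_conj_mul (a b : Fin 4) :
    pauli1 a * pauli1 b * pauli1 a = (chi1 a b : ℂ) • pauli1 b := by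
  fin_cases a <;> fin_cases b <;> ext i j <;> fin_cases i <;> fin_cases j <;>
    simp [pauli1, chi1, Matrix.mul_apply, Fin.sum_univ_two, Matrix.one_apply,
      Complex.ext_iff] <;> norm_num

lemma chi1_orth (b b' : Fin 4) :
    ∑ a : Fin 4, chi1 a b * chi1 a b' = if b = b' then 4 else 0 := by
  fin_cases b <;> fin_cases b' <;>
    simp (config := { decide := true }) [chi1, Fin.sum_univ_four] <;> norm_num

variable {n : ℕ}

lemma mulProd (F G : Fin n → Matrix (Fin 2) (Fin 2) ℂ) :
    (Matrix.of fun x y : Idx n => ∏ i, F i (x i) (y i)) *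
      (Matrix.of fun x y : Idx n => ∏ i, G i (x i) (y i)) =
    Matrix.of fun x y : Idx n => ∏ i, (F i * G i) (x i) (y i) := by
  ext x y
  simp only [Matrix.mul_apply, Matrix.of_apply]
  calc ∑ z : Idx n, (∏ i, F i (x i) (z i)) * ∏ i, G i (z i) (y i)
      = ∑ z : Idx n, ∏ i, (F i (x i) (z i) * G i (z i) (y i)) := by
        simp [Finset.prod_mul_distrib]
    _ = ∏ i, ∑ c : Fin 2, F i (x i) c * G i c (y i) := by
        rw [← Fintype.piFinset_univ]
        exact Finset.sum_prod_piFinset Finset.univ (fun i c => F i (x i) c * G i c (y i))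
    _ = ∏ i, (F i * G i) (x i) (y i) := by simp [Matrix.mul_apply]

lemma pauliOp_mul (p q : PIdx n) :
    pauliOp n p * pauliOp n q =
      Matrix.of fun x y : Idx n => ∏ i, (pauli1 (p i) * pauli1 (q i)) (x i) (y i) :=
  mulProd (fun i => pauli1 (p i)) (fun i => pauli1 (q i))

lemma prodOne (x y : Idx n) :
    (∏ i, (1 : Matrix (Fin 2) (Fin 2) ℂ) (x i) (y i)) = if x = y then 1 else 0 := by
  by_cases h : x = y
  · subst h; simp [Matrix.one_apply]
  · obtain ⟨i, hi⟩ := Function.ne_iff.mp h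
    rw [if_neg h]
    exact Finset.prod_eq_zero (Finset.mem_univ i) (by simp [Matrix.one_apply, hi])

lemma pauliOp_mul_self (p : PIdx n) : pauliOp n p * pauliOp n p = 1 := by
  rw [pauliOp_mul]; ext x y
  simp only [Matrix.of_apply, pauli1_mul_self]
  rw [prodOne]; simp [Matrix.one_apply]

lemma pauliOp_conjT (p : PIdx n) : (pauliOp n p)ᴴ = pauliOp n p := by
  ext x y
  simp only [Matrix.conjTranspose_apply, pauliOp, Matrix.of_apply]
  rw [show (star (∏ i, pauli1 (p i) (y i) (x i)) : ℂ)
      = (starRingEnd ℂ) (∏ i, pauli1 (p i) (y i) (x i)) from rfl, map_prod]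
  simp [pauli1_conj]

lemma pauliOp_conj (p q : PIdx n) :
    pauliOp n p * pauliOp n q * pauliOp n p =
      ((∏ i, chi1 (p i) (q i) : ℝ) : ℂ) • pauliOp n q := by
  have h1 : pauliOp n p * pauliOp n q * pauliOp n p =
      Matrix.of fun x y : Idx n =>
        ∏ i, (pauli1 (p i) * pauli1 (q i) * pauli1 (p i)) (x i) (y i) := by
    rw [pauliOp_mul]
    exact mulProd (fun i => pauli1 (p i) * pauli1 (q i)) (fun i => pauli1 (p i))
  rw [h1]
  ext x y
  simp only [Matrix.of_apply, pauli1_conj_mul, Matrix.smul_apply, smul_eq_mul]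
  rw [Finset.prod_mul_distrib]
  push_cast
  simp [pauliOp]

lemma pauliOp_complete (x y z w : Idx n) :
    ∑ p : PIdx n, pauliOp n p x y * pauliOp n p z w
      = if x = w ∧ y = z then (2:ℂ)^n else 0 := by
  calc ∑ p : PIdx n, pauliOp n p x y * pauliOp n p z w
      = ∑ p : PIdx n, ∏ i, (pauli1 (p i) (x i) (y i) * pauli1 (p i) (z i) (w i)) := by
        simp [pauliOp, Finset.prod_mul_distrib]
    _ = ∏ i, ∑ a : Fin 4, pauli1 a (x i) (y i) * pauli1 a (z i) (w i) := by
        rw [← Fintype.piFinset_univ]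
        exact Finset.sum_prod_piFinset Finset.univ
          (fun i a => pauli1 a (x i) (y i) * pauli1 a (z i) (w i))
    _ = ∏ i, (if x i = w i ∧ y i = z i then (2:ℂ) else 0) := by
        simp [pauli1_complete]
    _ = if x = w ∧ y = z then (2:ℂ)^n else 0 := by
        by_cases h : x = w ∧ y = z
        · have h1 : ∀ i, x i = w i ∧ y i = z i := fun i => ⟨congrFun h.1 i, congrFun h.2 i⟩
          simp only [if_pos h]
          rw [Finset.prod_congr rfl fun i _ => if_pos (h1 i)]
          simp
        · rw [if_neg h]
          have : ∃ i, ¬(x i = w i ∧ y i = z i) := by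
            by_contra hc; push_neg at hc
            exact h ⟨funext fun i => (hc i).1, funext fun i => (hc i).2⟩
          obtain ⟨i, hi⟩ := this
          exact Finset.prod_eq_zero (Finset.mem_univ i) (if_neg hi)

lemma chi_orth (q q' : PIdx n) :
    ∑ p : PIdx n, (∏ i, chi1 (p i) (q i)) * ∏ i, chi1 (p i) (q' i)
      = if q = q' then (4:ℝ)^n else 0 := by
  calc ∑ p : PIdx n, (∏ i, chi1 (p i) (q i)) * ∏ i, chi1 (p i) (q' i)
      = ∑ p : PIdx n, ∏ i, (chi1 (p i) (q i) * chi1 (p i) (q' i)) := by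
        simp [Finset.prod_mul_distrib]
    _ = ∏ i, ∑ a : Fin 4, chi1 a (q i) * chi1 a (q' i) := by
        rw [← Fintype.piFinset_univ]
        exact Finset.sum_prod_piFinset Finset.univ (fun i a => chi1 a (q i) * chi1 a (q' i))
    _ = ∏ i, (if q i = q' i then (4:ℝ) else 0) := by simp [chi1_orth]
    _ = if q = q' then (4:ℝ)^n else 0 := by
        by_cases h : q = q'
        · subst h; simp
        · rw [if_neg h]
          obtain ⟨i, hi⟩ := Function.ne_iff.mp h
          exact Finset.prod_eq_zero (Finset.mem_univ i) (if_neg hi)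

lemma trace_mul_pauli' (A : Op n) (p : PIdx n) :
    (A * pauliOp n p).trace = ∑ ij : Idx n × Idx n, A ij.1 ij.2 * pauliOp n p ij.2 ij.1 := by
  rw [Fintype.sum_prod_type]
  simp [Matrix.trace, Matrix.diag, Matrix.mul_apply]

lemma parseval (A B : Op n) :
    ∑ p : PIdx n, (A * pauliOp n p).trace * (B * pauliOp n p).trace
      = (2:ℂ)^n * (A * B).trace := by
  have key : ∀ p : PIdx n, (A * pauliOp n p).trace * (B * pauliOp n p).trace
      = ∑ ij : Idx n × Idx n, ∑ kl : Idx n × Idx n,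
          A ij.1 ij.2 * B kl.1 kl.2 * (pauliOp n p ij.2 ij.1 * pauliOp n p kl.2 kl.1) := by
    intro p
    rw [trace_mul_pauli' A p, trace_mul_pauli' B p, Finset.sum_mul_sum]
    exact Finset.sum_congr rfl fun ij _ => Finset.sum_congr rfl fun kl _ => by ring
  rw [Finset.sum_congr rfl fun p _ => key p, Finset.sum_comm]
  have step : ∀ ij : Idx n × Idx n,
      (∑ p : PIdx n, ∑ kl : Idx n × Idx n,
        A ij.1 ij.2 * B kl.1 kl.2 * (pauliOp n p ij.2 ij.1 * pauliOp n p kl.2 kl.1))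
      = (2:ℂ)^n * (A ij.1 ij.2 * B ij.2 ij.1) := by
    intro ij
    rw [Finset.sum_comm]
    have h1 : ∀ kl : Idx n × Idx n,
        (∑ p : PIdx n, A ij.1 ij.2 * B kl.1 kl.2 *
          (pauliOp n p ij.2 ij.1 * pauliOp n p kl.2 kl.1))
        = A ij.1 ij.2 * B kl.1 kl.2 * (if ij.2 = kl.1 ∧ ij.1 = kl.2 then (2:ℂ)^n else 0) := by
      intro kl
      rw [← Finset.mul_sum, pauliOp_complete]
    rw [Finset.sum_congr rfl fun kl _ => h1 kl, Finset.sum_eq_single (ij.2, ij.1)]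
    · rw [if_pos ⟨rfl, rfl⟩]; ring
    · intro kl _ hkl
      rw [if_neg, mul_zero]
      rintro ⟨h1, h2⟩; exact hkl (Prod.ext h1.symm h2.symm)
    · intro h; exact absurd (Finset.mem_univ _) h
  rw [Finset.sum_congr rfl fun ij _ => step ij, ← Finset.mul_sum]
  congr 1
  rw [Fintype.sum_prod_type]
  simp [Matrix.trace, Matrix.diag, Matrix.mul_apply]

lemma expand (A : Op n) :
    ∑ q : PIdx n, (A * pauliOp n q).trace • pauliOp n q = (2:ℂ)^n • A := by
  ext x y
  simp only [Matrix.sum_apply, Matrix.smul_apply, smul_eq_mul]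
  calc ∑ q : PIdx n, (A * pauliOp n q).trace * pauliOp n q x y
      = ∑ q : PIdx n, ∑ kl : Idx n × Idx n,
          A kl.1 kl.2 * (pauliOp n q kl.2 kl.1 * pauliOp n q x y) := by
        refine Finset.sum_congr rfl fun q _ => ?_
        rw [trace_mul_pauli', Finset.sum_mul]
        exact Finset.sum_congr rfl fun kl _ => by ring
    _ = ∑ kl : Idx n × Idx n, A kl.1 kl.2 * (if kl.2 = y ∧ kl.1 = x then (2:ℂ)^n else 0) := by
        rw [Finset.sum_comm]
        exact Finset.sum_congr rfl fun kl _ => by rw [← Finset.mul_sum, pauliOp_complete]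
    _ = (2:ℂ)^n * A x y := by
        rw [Finset.sum_eq_single (x, y)]
        · rw [if_pos ⟨rfl, rfl⟩]; ring
        · intro kl _ hkl; rw [if_neg, mul_zero]
          rintro ⟨h1, h2⟩; exact hkl (Prod.ext h2 h1)
        · intro h; exact absurd (Finset.mem_univ _) h

lemma trace_pauli_real (A : Op n) (hA : A.IsHermitian) (p : PIdx n) :
    (A * pauliOp n p).trace = ((XiC A p : ℝ) : ℂ) := by
  have h : (starRingEnd ℂ) ((A * pauliOp n p).trace) = (A * pauliOp n p).trace := by
    rw [show (starRingEnd ℂ) ((A * pauliOp n p).trace)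
        = star ((A * pauliOp n p).trace) from rfl,
      ← Matrix.trace_conjTranspose, Matrix.conjTranspose_mul, pauliOp_conjT, hA.eq,
      Matrix.trace_mul_comm]
  exact (Complex.conj_eq_iff_re.mp h).symm

lemma twist_formula (ρ O : Op n) (hρh : ρ.IsHermitian) (hOh : O.IsHermitian) (p : PIdx n) :
    (2:ℝ)^n * twistXi ρ O p
      = ∑ q : PIdx n, (∏ i, chi1 (p i) (q i)) * crossXi ρ O q := by
  have hsmul : (2:ℂ)^n • (ρ * pauliOp n p * O * pauliOp n p)
      = ∑ q : PIdx n, ((O * pauliOp n q).trace * ((∏ i, chi1 (p i) (q i) : ℝ) : ℂ))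
          • (ρ * pauliOp n q) := by
    calc (2:ℂ)^n • (ρ * pauliOp n p * O * pauliOp n p)
        = ρ * pauliOp n p * ((2:ℂ)^n • O) * pauliOp n p := by
          rw [Matrix.mul_smul, Matrix.smul_mul]
      _ = ρ * pauliOp n p * (∑ q : PIdx n, (O * pauliOp n q).trace • pauliOp n q)
            * pauliOp n p := by rw [expand]
      _ = ∑ q : PIdx n, (O * pauliOp n q).trace
            • (ρ * (pauliOp n p * pauliOp n q * pauliOp n p)) := by
          rw [Finset.mul_sum, Finset.sum_mul]
          refine Finset.sum_congr rfl fun q _ => ?_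
          rw [Matrix.mul_smul, Matrix.smul_mul]
          congr 1
          simp only [Matrix.mul_assoc]
      _ = ∑ q : PIdx n, ((O * pauliOp n q).trace * ((∏ i, chi1 (p i) (q i) : ℝ) : ℂ))
            • (ρ * pauliOp n q) := by
          refine Finset.sum_congr rfl fun q _ => ?_
          rw [pauliOp_conj, Matrix.mul_smul, smul_smul]
  have htr := congrArg Matrix.trace hsmul
  rw [Matrix.trace_smul, Matrix.trace_sum] at htr
  simp only [Matrix.trace_smul, smul_eq_mul] at htr
  have hsum : ∑ q : PIdx n, ((O * pauliOp n q).trace * ((∏ i, chi1 (p i) (q i) : ℝ) : ℂ))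
        * (ρ * pauliOp n q).trace
      = ((∑ q : PIdx n, (∏ i, chi1 (p i) (q i)) * crossXi ρ O q : ℝ) : ℂ) := by
    push_cast
    refine Finset.sum_congr rfl fun q _ => ?_
    rw [trace_pauli_real O hOh q, trace_pauli_real ρ hρh q]
    simp only [crossXi]
    push_cast
    ring
  have hre := congrArg Complex.re (htr.trans hsum)
  rw [show ((2:ℂ)^n) = (((2:ℝ)^n : ℝ) : ℂ) by push_cast; ring] at hre
  rw [Complex.re_ofReal_mul, Complex.ofReal_re] at hre
  exact hre

lemma twist_sq_eq (ρ O : Op n) (hρh : ρ.IsHermitian) (hOh : O.IsHermitian) :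
    ∑ p : PIdx n, twistXi ρ O p ^ 2 = ∑ p : PIdx n, crossXi ρ O p ^ 2 := by
  have step1 : ∀ p : PIdx n, ((2:ℝ)^n * twistXi ρ O p)^2
      = ∑ q : PIdx n, ∑ q' : PIdx n, (crossXi ρ O q * crossXi ρ O q') *
          ((∏ i, chi1 (p i) (q i)) * ∏ i, chi1 (p i) (q' i)) := by
    intro p
    rw [twist_formula ρ O hρh hOh p, sq, Finset.sum_mul_sum]
    exact Finset.sum_congr rfl fun q _ => Finset.sum_congr rfl fun q' _ => by ring
  have step2 : ∑ p : PIdx n, ((2:ℝ)^n * twistXi ρ O p)^2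
      = ∑ q : PIdx n, ∑ q' : PIdx n, (crossXi ρ O q * crossXi ρ O q') *
          (if q = q' then (4:ℝ)^n else 0) := by
    rw [Finset.sum_congr rfl fun p _ => step1 p, Finset.sum_comm]
    refine Finset.sum_congr rfl fun q _ => ?_
    rw [Finset.sum_comm]
    refine Finset.sum_congr rfl fun q' _ => ?_
    rw [← Finset.mul_sum, chi_orth]
  have step3 : ∑ q : PIdx n, ∑ q' : PIdx n, (crossXi ρ O q * crossXi ρ O q') *
          (if q = q' then (4:ℝ)^n else 0)
      = (4:ℝ)^n * ∑ q : PIdx n, crossXi ρ O q ^ 2 := by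
    rw [Finset.mul_sum]
    refine Finset.sum_congr rfl fun q _ => ?_
    rw [Finset.sum_eq_single q]
    · rw [if_pos rfl]; ring
    · intro q' _ hq'; rw [if_neg (fun h => hq' h.symm), mul_zero]
    · intro h; exact absurd (Finset.mem_univ _) h
  have lhs : ∑ p : PIdx n, ((2:ℝ)^n * twistXi ρ O p)^2
      = ((2:ℝ)^n)^2 * ∑ p : PIdx n, twistXi ρ O p ^ 2 := by
    rw [Finset.mul_sum]
    exact Finset.sum_congr rfl fun p _ => by ring
  have h4 : (4:ℝ)^n = ((2:ℝ)^n)^2 := by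
    rw [← pow_mul, mul_comm, pow_mul]; norm_num
  have key := (lhs.symm.trans step2).trans step3
  rw [h4] at key
  exact mul_left_cancel₀ (by positivity) key

lemma xi_parseval (A : Op n) (hA : A.IsHermitian) :
    ∑ p : PIdx n, XiC A p ^ 2 = (2:ℝ)^n * ((A * A).trace).re := by
  have h := parseval A A
  have h2 : ∑ p : PIdx n, (A * pauliOp n p).trace * (A * pauliOp n p).trace
      = ((∑ p : PIdx n, XiC A p ^ 2 : ℝ) : ℂ) := by
    push_cast
    refine Finset.sum_congr rfl fun p _ => ?_
    rw [trace_pauli_real A hA]; push_cast; ring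
  rw [h2] at h
  have h3 := congrArg Complex.re h
  rw [Complex.ofReal_re,
    show ((2:ℂ)^n) = (((2:ℝ)^n : ℝ) : ℂ) by push_cast; ring,
    Complex.re_ofReal_mul] at h3
  exact h3

lemma complex_cs {ι : Type*} [Fintype ι] (f g : ι → ℂ) :
    Complex.normSq (∑ i, f i * g i)
      ≤ (∑ i, Complex.normSq (f i)) * (∑ i, Complex.normSq (g i)) := by
  have h1 : ‖∑ i, f i * g i‖
      ≤ ∑ i, ‖f i‖ * ‖g i‖ := by
    calc ‖∑ i, f i * g i‖ ≤ ∑ i, ‖f i * g i‖ :=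
          norm_sum_le _ _
      _ = ∑ i, ‖f i‖ * ‖g i‖ := by simp [norm_mul]
  have h2 := Finset.sum_mul_sq_le_sq_mul_sq Finset.univ
    (fun i => ‖f i‖) (fun i => ‖g i‖)
  have h3 : (‖∑ i, f i * g i‖)^2
      ≤ (∑ i, ‖f i‖ * ‖g i‖)^2 :=
    pow_le_pow_left₀ (norm_nonneg _) h1 2
  calc Complex.normSq (∑ i, f i * g i) = (‖∑ i, f i * g i‖)^2 :=
        (Complex.sq_norm _).symm
    _ ≤ (∑ i, ‖f i‖ * ‖g i‖)^2 := h3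
    _ ≤ (∑ i, (‖f i‖)^2) * (∑ i, (‖g i‖)^2) := h2
    _ = (∑ i, Complex.normSq (f i)) * (∑ i, Complex.normSq (g i)) := by
        simp [Complex.sq_norm]

lemma trace_herm_inner (A B : Op n) :
    (Aᴴ * B).trace
      = ∑ ij : Idx n × Idx n, (starRingEnd ℂ) (A ij.1 ij.2) * B ij.1 ij.2 := by
  rw [Fintype.sum_prod_type]
  calc (Aᴴ * B).trace = ∑ j : Idx n, ∑ i : Idx n, (starRingEnd ℂ) (A i j) * B i j := by
        simp [Matrix.trace, Matrix.diag, Matrix.mul_apply, Matrix.conjTranspose_apply]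
    _ = ∑ i : Idx n, ∑ j : Idx n, (starRingEnd ℂ) (A i j) * B i j := Finset.sum_comm

lemma trace_conj_self (A : Op n) :
    ((Aᴴ * A).trace).re = ∑ ij : Idx n × Idx n, Complex.normSq (A ij.1 ij.2) := by
  rw [trace_herm_inner, Complex.re_sum]
  refine Finset.sum_congr rfl fun ij _ => ?_
  rw [mul_comm, Complex.mul_conj]
  exact Complex.ofReal_re _

lemma resq_le_normSq (z : ℂ) : z.re ^ 2 ≤ Complex.normSq z := by
  rw [Complex.normSq_apply]; nlinarith [sq_nonneg z.im]

lemma xiC_rho_le_one (ρ : Op n) (hρ : IsDensity ρ) (p : PIdx n) :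
    XiC ρ p ^ 2 ≤ 1 := by
  obtain ⟨Bm, hB⟩ : ∃ B : Op n, ρ = Bᴴ * B := by
    open scoped MatrixOrder in exact CStarAlgebra.nonneg_iff_eq_star_mul_self.mp hρ.1.nonneg
  have htr : (ρ * pauliOp n p).trace = (Bmᴴ * (Bm * pauliOp n p)).trace := by
    rw [hB, Matrix.mul_assoc]
  have h1 : Complex.normSq ((ρ * pauliOp n p).trace)
      ≤ ((Bmᴴ * Bm).trace).re * (((Bm * pauliOp n p)ᴴ * (Bm * pauliOp n p)).trace).re := by
    rw [htr, trace_herm_inner, trace_conj_self, trace_conj_self]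
    have := complex_cs (fun ij : Idx n × Idx n => (starRingEnd ℂ) (Bm ij.1 ij.2))
      (fun ij : Idx n × Idx n => (Bm * pauliOp n p) ij.1 ij.2)
    simpa [Complex.normSq_conj] using this
  have h2 : ((Bm * pauliOp n p)ᴴ * (Bm * pauliOp n p)).trace = ρ.trace := by
    rw [Matrix.conjTranspose_mul, pauliOp_conjT]
    calc (pauliOp n p * Bmᴴ * (Bm * pauliOp n p)).trace
        = (pauliOp n p * (ρ * pauliOp n p)).trace := by
          rw [hB]; congr 1; simp [Matrix.mul_assoc]
      _ = (ρ * pauliOp n p * pauliOp n p).trace := by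
          rw [Matrix.trace_mul_comm]
      _ = ρ.trace := by rw [Matrix.mul_assoc, pauliOp_mul_self, Matrix.mul_one]
  have h3 : ((Bmᴴ * Bm).trace).re = 1 := by rw [← hB, hρ.2]; rfl
  rw [h2, hρ.2, h3] at h1
  simp only [Complex.one_re, one_mul] at h1
  exact le_trans (resq_le_normSq _) h1

lemma purity_le_one' (ρ : Op n) (hρ : IsDensity ρ) : ((ρ * ρ).trace).re ≤ 1 := by
  obtain ⟨Bm, hB⟩ : ∃ B : Op n, ρ = Bᴴ * B := by
    open scoped MatrixOrder in exact CStarAlgebra.nonneg_iff_eq_star_mul_self.mp hρ.1.nonneg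
  set M := Bm * Bmᴴ with hMdef
  have hM : Mᴴ = M := by simp [hMdef, Matrix.conjTranspose_mul]
  have htr : (ρ * ρ).trace = (Mᴴ * M).trace := by
    rw [hM, hB]
    calc (Bmᴴ * Bm * (Bmᴴ * Bm)).trace = (Bmᴴ * (Bm * Bmᴴ * Bm)).trace := by
          congr 1; simp [Matrix.mul_assoc]
      _ = (Bm * Bmᴴ * Bm * Bmᴴ).trace := by
          rw [Matrix.trace_mul_comm]
      _ = (M * M).trace := by congr 1; simp [hMdef, Matrix.mul_assoc]
  set r : Idx n → ℝ := fun i => ∑ k : Idx n, Complex.normSq (Bm i k) with hrdef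
  have hr0 : ∀ i, 0 ≤ r i := fun i => Finset.sum_nonneg fun k _ => Complex.normSq_nonneg _
  have hrsum : ∑ i : Idx n, r i = 1 := by
    have h1 : ((Bmᴴ * Bm).trace).re = 1 := by rw [← hB, hρ.2]; rfl
    rw [trace_conj_self] at h1
    rw [← h1, Fintype.sum_prod_type]
  have hMij : ∀ i j : Idx n, Complex.normSq (M i j) ≤ r i * r j := by
    intro i j
    have hM : M i j = ∑ k : Idx n, Bm i k * (starRingEnd ℂ) (Bm j k) := by
      simp [hMdef, Matrix.mul_apply, Matrix.conjTranspose_apply]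
    rw [hM]
    have := complex_cs (fun k : Idx n => Bm i k) (fun k => (starRingEnd ℂ) (Bm j k))
    simpa [Complex.normSq_conj, hrdef] using this
  calc ((ρ * ρ).trace).re = ∑ ij : Idx n × Idx n, Complex.normSq (M ij.1 ij.2) := by
        rw [htr, trace_conj_self]
    _ ≤ ∑ ij : Idx n × Idx n, r ij.1 * r ij.2 :=
        Finset.sum_le_sum fun ij _ => hMij ij.1 ij.2
    _ = (∑ i : Idx n, r i) * (∑ j : Idx n, r j) := by
        rw [Finset.sum_mul_sum, Fintype.sum_prod_type]
    _ = 1 := by rw [hrsum]; norm_num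

lemma exists_top_set {ι : Type*} [Fintype ι] [DecidableEq ι] (a : ι → ℝ) (k : ℕ)
    (hk : k ≤ Fintype.card ι) :
    ∃ S : Finset ι, S.card = k ∧ ∀ x ∈ S, ∀ y ∉ S, a y ≤ a x := by
  induction k with
  | zero => exact ⟨∅, rfl, by simp⟩
  | succ m ih =>
    obtain ⟨S, hcard, hS⟩ := ih (le_of_lt (Nat.lt_of_succ_le hk))
    have hne : (Sᶜ : Finset ι).Nonempty := by
      rw [← Finset.card_pos, Finset.card_compl, hcard]; omega
    obtain ⟨y0, hy0mem, hy0max⟩ := Finset.exists_max_image (Sᶜ : Finset ι) a hne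
    refine ⟨insert y0 S, ?_, ?_⟩
    · rw [Finset.card_insert_of_notMem (Finset.mem_compl.mp hy0mem), hcard]
    · intro x hx z hz
      have hzS : z ∉ S := fun h => hz (Finset.mem_insert_of_mem h)
      have hzc : z ∈ (Sᶜ : Finset ι) := Finset.mem_compl.mpr hzS
      rcases Finset.mem_insert.mp hx with h | h
      · subst h; exact hy0max z hzc
      · exact hS x h z hzS

lemma knapsack {ι : Type*} [Fintype ι] [DecidableEq ι] (w a : ι → ℝ) (k : ℕ)
    (hk1 : 1 ≤ k) (hk : k ≤ Fintype.card ι)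
    (hw0 : ∀ i, 0 ≤ w i) (hw1 : ∀ i, w i ≤ 1) (hwsum : ∑ i, w i ≤ (k : ℝ))
    (ha : ∀ i, 0 ≤ a i) :
    ∃ S : Finset ι, S.card = k ∧ ∑ i, w i * a i ≤ ∑ i ∈ S, a i := by
  obtain ⟨S, hcard, htop⟩ := exists_top_set a k hk
  refine ⟨S, hcard, ?_⟩
  have hSne : S.Nonempty := Finset.card_pos.mp (by omega)
  obtain ⟨p0, hp0S, hp0min⟩ := Finset.exists_min_image S a hSne
  set m := a p0 with hm
  have hm0 : 0 ≤ m := ha p0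
  have hsplit : ∑ i ∈ S, w i * a i + ∑ i ∈ Sᶜ, w i * a i = ∑ i, w i * a i :=
    Finset.sum_add_sum_compl S _
  have h1 : ∑ i ∈ Sᶜ, w i * a i ≤ m * ∑ i ∈ Sᶜ, w i := by
    rw [Finset.mul_sum]
    refine Finset.sum_le_sum fun i hi => ?_
    have hia := htop p0 hp0S i (Finset.mem_compl.mp hi)
    nlinarith [hw0 i]
  have h2 : ∑ i ∈ S, w i * a i ≤ ∑ i ∈ S, a i - m * ∑ i ∈ S, (1 - w i) := by
    rw [Finset.mul_sum, ← Finset.sum_sub_distrib]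
    refine Finset.sum_le_sum fun i hi => ?_
    have hai := hp0min i hi
    nlinarith [hw1 i, hw0 i]
  have hSw : ∑ i ∈ S, (1 - w i) = (k : ℝ) - ∑ i ∈ S, w i := by
    rw [Finset.sum_sub_distrib, Finset.sum_const, hcard]; simp
  have hcw : ∑ i ∈ Sᶜ, w i = ∑ i, w i - ∑ i ∈ S, w i := by
    rw [← Finset.sum_add_sum_compl S w]; ring
  nlinarith [h1, h2, hsplit, hSw, hcw, hm0, hwsum]

lemma topdSum_bdd (g : PIdx n → ℝ) :
    BddAbove {x | ∃ S : Finset (PIdx n), S.card = 2^n ∧ x = ∑ p ∈ S, g p} := by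
  have hsub : {x | ∃ S : Finset (PIdx n), S.card = 2^n ∧ x = ∑ p ∈ S, g p}
      ⊆ (fun S : Finset (PIdx n) => ∑ p ∈ S, g p) '' Set.univ := by
    rintro x ⟨S, _, rfl⟩; exact ⟨S, trivial, rfl⟩
  exact BddAbove.mono hsub (Set.Finite.image _ Set.finite_univ).bddAbove

lemma card_PIdx_ge : 2^n ≤ Fintype.card (PIdx n) := by
  rw [show Fintype.card (PIdx n) = Fintype.card (Fin 4) ^ Fintype.card (Fin n) from
    Fintype.card_fun]
  simp only [Fintype.card_fin]
  exact Nat.pow_le_pow_left (by norm_num) n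

end CrossChainAux

/-- norm chain for the (twisted) cross characteristic functions of a
state and a traceless observable. -/
theorem cross_char_norm_chain (n : ℕ) (ρ O : Op n)
    (hρ : IsDensity ρ) (hO : O.IsHermitian) (hO0 : O.trace = 0) :
    |∑ p : PIdx n, twistXi ρ O p * crossXi ρ O p| ≤ ∑ p : PIdx n, (twistXi ρ O p) ^ 2
    ∧ (∑ p : PIdx n, (twistXi ρ O p) ^ 2 = ∑ p : PIdx n, (crossXi ρ O p) ^ 2)
    ∧ (∑ p : PIdx n, (crossXi ρ O p) ^ 2 ≤ topdSum (fun p => (XiC O p) ^ 2))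
    ∧ (topdSum (fun p => (XiC O p) ^ 2) ≤ ∑ p : PIdx n, (XiC O p) ^ 2)
    ∧ (∑ p : PIdx n, (XiC O p) ^ 2 = dim n * hsNormSq O) := by
  classical
  have hρh : ρ.IsHermitian := hρ.1.1
  have part2 := CrossChainAux.twist_sq_eq ρ O hρh hO
  have part1 : |∑ p : PIdx n, twistXi ρ O p * crossXi ρ O p|
      ≤ ∑ p : PIdx n, twistXi ρ O p ^ 2 := by
    have hcs := Finset.sum_mul_sq_le_sq_mul_sq Finset.univ
      (fun p : PIdx n => twistXi ρ O p) (fun p => crossXi ρ O p)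
    rw [← part2] at hcs
    have h0 : (0:ℝ) ≤ ∑ p : PIdx n, twistXi ρ O p ^ 2 :=
      Finset.sum_nonneg fun p _ => sq_nonneg _
    nlinarith [abs_nonneg (∑ p : PIdx n, twistXi ρ O p * crossXi ρ O p),
      sq_abs (∑ p : PIdx n, twistXi ρ O p * crossXi ρ O p)]
  have part5 : ∑ p : PIdx n, XiC O p ^ 2 = dim n * hsNormSq O := by
    rw [CrossChainAux.xi_parseval O hO]; rfl
  have hwsum : ∑ p : PIdx n, XiC ρ p ^ 2 ≤ ((2^n : ℕ) : ℝ) := by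
    rw [CrossChainAux.xi_parseval ρ hρh]
    push_cast
    nlinarith [CrossChainAux.purity_le_one' ρ hρ, pow_pos (show (0:ℝ) < 2 by norm_num) n]
  obtain ⟨S, hScard, hle⟩ := CrossChainAux.knapsack (fun p : PIdx n => XiC ρ p ^ 2)
    (fun p => XiC O p ^ 2) (2^n) Nat.one_le_two_pow CrossChainAux.card_PIdx_ge
    (fun p => sq_nonneg _) (fun p => CrossChainAux.xiC_rho_le_one ρ hρ p) hwsum
    (fun p => sq_nonneg _)
  have part3 : ∑ p : PIdx n, crossXi ρ O p ^ 2 ≤ topdSum (fun p => XiC O p ^ 2) := by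
    calc ∑ p : PIdx n, crossXi ρ O p ^ 2
        = ∑ p : PIdx n, (XiC ρ p ^ 2) * (XiC O p ^ 2) := by
          refine Finset.sum_congr rfl fun p _ => ?_
          rw [crossXi]; ring
      _ ≤ ∑ p ∈ S, XiC O p ^ 2 := hle
      _ ≤ topdSum (fun p => XiC O p ^ 2) :=
          le_csSup (CrossChainAux.topdSum_bdd _) ⟨S, hScard, rfl⟩
  have part4 : topdSum (fun p => XiC O p ^ 2) ≤ ∑ p : PIdx n, XiC O p ^ 2 := by
    apply csSup_le
    · obtain ⟨T, _, hTcard⟩ := Finset.exists_subset_card_eq (s := (Finset.univ : Finset (PIdx n)))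
        (n := 2^n) (by simpa [Finset.card_univ] using CrossChainAux.card_PIdx_ge)
      exact ⟨∑ p ∈ T, XiC O p ^ 2, T, hTcard, rfl⟩
    · rintro x ⟨S', hScard', rfl⟩
      exact Finset.sum_le_sum_of_subset_of_nonneg (Finset.subset_univ _)
        fun i _ _ => sq_nonneg _
  exact ⟨part1, part2, part3, part4, part5⟩
end
end

section
/- Let ρ be a density operator on the n-qubit Hilbert space, |φ⟩ ∈ H a unit vector, O = |φ⟩⟨φ| − 𝟙/d, and F = ⟨φ|ρ|φ⟩. Then Ξ̃_{ρ,O}·Ξ_{ρ,O} = Ξ̃_{ρ,φ}·Ξ_{ρ,φ} − 2F + 1/d ≤ ‖Ξ_{ρ,O}‖₂² = ‖Ξ_{ρ,φ}‖₂² − 1 < ‖Ξ_φ²‖_{[d]}, where Ξ_{ρ,φ} and Ξ̃_{ρ,φ} denote the (twisted) cross characteristic functions of (ρ, |φ⟩⟨φ|). Moreover, for ρ = |φ⟩⟨φ| one has Ξ̃_{φ,φ}·Ξ_{φ,φ} = ‖Ξ_{φ,φ}‖₂² = 2^{−M₂(φ)}·d. -/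
open MeasureTheory Matrix
open scoped BigOperators ENNReal Real ComplexConjugate ComplexOrder

noncomputable section

open ThriftyShadow

namespace CrossChar
open ThriftyShadow Matrix
open scoped ComplexConjugate

variable {n : ℕ}

def tp (f : Fin n → Matrix (Fin 2) (Fin 2) ℂ) : Op n :=
  Matrix.of fun x y => ∏ i, f i (x i) (y i)

lemma tp_apply (f : Fin n → Matrix (Fin 2) (Fin 2) ℂ) (x y : Idx n) :
    tp f x y = ∏ i, f i (x i) (y i) := rfl

lemma tp_mul (f g : Fin n → Matrix (Fin 2) (Fin 2) ℂ) :
    tp f * tp g = tp fun i => f i * g i := by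
  ext x y
  simp only [Matrix.mul_apply, tp_apply, Fintype.prod_sum]
  exact Finset.sum_congr rfl fun z _ => (Finset.prod_mul_distrib).symm

lemma tp_trace (f : Fin n → Matrix (Fin 2) (Fin 2) ℂ) :
    (tp f).trace = ∏ i, (f i).trace := by
  simp only [Matrix.trace, Matrix.diag, tp_apply, Fintype.prod_sum]

lemma tp_one : tp (fun _ : Fin n => 1) = 1 := by
  ext x y
  simp only [tp_apply, Matrix.one_apply]
  by_cases h : x = y
  · subst h; simp
  · rw [if_neg h]
    obtain ⟨i, hi⟩ := Function.ne_iff.mp h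
    exact Finset.prod_eq_zero (Finset.mem_univ i) (by simp [if_neg hi])

lemma tp_conjTranspose (f : Fin n → Matrix (Fin 2) (Fin 2) ℂ) :
    (tp f)ᴴ = tp fun i => (f i)ᴴ := by
  ext x y
  simp [tp_apply, Matrix.conjTranspose_apply, map_prod]

lemma tp_smul (c : Fin n → ℂ) (f : Fin n → Matrix (Fin 2) (Fin 2) ℂ) :
    tp (fun i => c i • f i) = (∏ i, c i) • tp f := by
  ext x y
  simp [tp_apply, Finset.prod_mul_distrib, Matrix.smul_apply, smul_eq_mul]

lemma pauliOp_eq (p : PIdx n) : pauliOp n p = tp fun i => pauli1 (p i) := rfl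

lemma p1_mul_self (k : Fin 4) : pauli1 k * pauli1 k = 1 := by
  fin_cases k <;> ext a b <;> fin_cases a <;> fin_cases b <;>
    simp [pauli1, Matrix.mul_apply, Fin.sum_univ_two, Matrix.one_apply, Complex.I_mul_I]

lemma p1_conj (k : Fin 4) (a b : Fin 2) : conj (pauli1 k a b) = pauli1 k b a := by
  fin_cases k <;> fin_cases a <;> fin_cases b <;>
    simp [pauli1, Matrix.one_apply, Complex.conj_I]

lemma p1_trace (k : Fin 4) : (pauli1 k).trace = if k = 0 then 2 else 0 := by
  fin_cases k <;> simp [pauli1, Matrix.trace, Fin.sum_univ_two] <;> norm_num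

lemma p1_complete (a b c d : Fin 2) :
    ∑ k : Fin 4, pauli1 k a b * pauli1 k c d = if a = d ∧ b = c then 2 else 0 := by
  fin_cases a <;> fin_cases b <;> fin_cases c <;> fin_cases d <;>
    simp [pauli1, Fin.sum_univ_four, Matrix.one_apply, Complex.I_mul_I] <;> ring_nf <;>
    simp [Complex.I_sq] <;> ring

def chi1 (a b : Fin 4) : ℝ := if a = 0 ∨ b = 0 ∨ a = b then 1 else -1

lemma p1_twist (a b : Fin 4) : pauli1 a * pauli1 b * pauli1 a = (chi1 a b : ℂ) • pauli1 b := by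
  fin_cases a <;> fin_cases b <;> ext x y <;> fin_cases x <;> fin_cases y <;>
    simp [pauli1, chi1, Matrix.mul_apply, Fin.sum_univ_two, Matrix.one_apply,
      Matrix.smul_apply, Complex.I_mul_I, smul_eq_mul] <;> ring_nf <;>
    simp [Complex.I_sq] <;> ring

def chiZ (a b : Fin 4) : ℤ := if a = 0 ∨ b = 0 ∨ a = b then 1 else -1

lemma chi1_eq_chiZ (a b : Fin 4) : chi1 a b = (chiZ a b : ℝ) := by
  unfold chi1 chiZ; split_ifs <;> norm_num

lemma chiZ_orth (b b' : Fin 4) :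
    ∑ a : Fin 4, chiZ a b * chiZ a b' = if b = b' then 4 else 0 := by
  revert b b'; decide

lemma chi1_orth (b b' : Fin 4) :
    ∑ a : Fin 4, chi1 a b * chi1 a b' = if b = b' then 4 else 0 := by
  have h : ∑ a : Fin 4, chi1 a b * chi1 a b'
      = ((∑ a : Fin 4, chiZ a b * chiZ a b' : ℤ) : ℝ) := by
    push_cast
    simp [chi1_eq_chiZ]
  rw [h, chiZ_orth]
  split_ifs <;> norm_num

lemma chi1_nonzero (a b : Fin 4) : chi1 a b = 1 ∨ chi1 a b = -1 := by
  unfold chi1; split <;> simp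

lemma p1_herm (k : Fin 4) : (pauli1 k)ᴴ = pauli1 k := by
  ext a b; simp [Matrix.conjTranspose_apply, p1_conj]

section NQubit
variable {n : ℕ}

def chi (p q : PIdx n) : ℝ := ∏ i, chi1 (p i) (q i)

lemma dimC_eq : ((dim n : ℝ) : ℂ) = 2 ^ n := by
  rw [dim]; push_cast; ring

lemma pauliOp_mul_self (p : PIdx n) : pauliOp n p * pauliOp n p = 1 := by
  rw [pauliOp_eq, tp_mul]
  simp only [p1_mul_self]
  exact tp_one

lemma pauliOp_herm (p : PIdx n) : (pauliOp n p)ᴴ = pauliOp n p := by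
  rw [pauliOp_eq, tp_conjTranspose]
  simp only [p1_herm]

lemma pauliOp_zero : pauliOp n (fun _ => 0) = 1 := by
  rw [pauliOp_eq]
  have : pauli1 (0 : Fin 4) = 1 := rfl
  simp only [this]
  exact tp_one

lemma pauliOp_trace (p : PIdx n) :
    (pauliOp n p).trace = if p = (fun _ => 0) then ((dim n : ℝ) : ℂ) else 0 := by
  rw [pauliOp_eq, tp_trace]
  simp only [p1_trace]
  by_cases h : p = fun _ => 0
  · rw [if_pos h, dimC_eq]
    subst h
    simp
  · rw [if_neg h]
    obtain ⟨i, hi⟩ := Function.ne_iff.mp h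
    exact Finset.prod_eq_zero (Finset.mem_univ i) (by simp [if_neg hi])

lemma pauli_complete_entry (x y z w : Idx n) :
    ∑ p : PIdx n, pauliOp n p x y * pauliOp n p z w
      = if x = w ∧ y = z then ((dim n : ℝ) : ℂ) else 0 := by
  have h : ∀ p : PIdx n, pauliOp n p x y * pauliOp n p z w
      = ∏ i, pauli1 (p i) (x i) (y i) * pauli1 (p i) (z i) (w i) := fun p => by
    rw [pauliOp_eq, tp_apply, tp_apply, Finset.prod_mul_distrib]
  simp_rw [h]
  have hps := Fintype.prod_sum (κ := fun _ : Fin n => Fin 4)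
    (fun i k => pauli1 k (x i) (y i) * pauli1 k (z i) (w i))
  rw [← hps]
  simp_rw [p1_complete]
  by_cases hc : x = w ∧ y = z
  · rw [if_pos hc, dimC_eq]
    obtain ⟨h1, h2⟩ := hc
    subst h1; subst h2
    simp
  · rw [if_neg hc]
    have : ∃ i, ¬(x i = w i ∧ y i = z i) := by
      by_contra hno
      push_neg at hno
      exact hc ⟨funext fun i => (hno i).1, funext fun i => (hno i).2⟩
    obtain ⟨i, hi⟩ := this
    exact Finset.prod_eq_zero (Finset.mem_univ i) (by rw [if_neg hi])

lemma trace_mul_eq_sum (M N : Op n) :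
    (M * N).trace = ∑ u : Idx n × Idx n, M u.1 u.2 * N u.2 u.1 := by
  simp [Matrix.trace, Matrix.diag, Matrix.mul_apply, Fintype.sum_prod_type]

lemma sum_trace_mul (A B : Op n) :
    ∑ p : PIdx n, (A * pauliOp n p).trace * (B * pauliOp n p).trace
      = ((dim n : ℝ) : ℂ) * (A * B).trace := by
  simp_rw [trace_mul_eq_sum, Finset.sum_mul_sum]
  rw [Finset.sum_comm]
  have hcol : ∀ u : Idx n × Idx n,
      ∑ p : PIdx n, ∑ v : Idx n × Idx n,
        A u.1 u.2 * pauliOp n p u.2 u.1 * (B v.1 v.2 * pauliOp n p v.2 v.1)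
      = A u.1 u.2 * B u.2 u.1 * ((dim n : ℝ) : ℂ) := by
    intro u
    rw [Finset.sum_comm]
    have : ∀ v : Idx n × Idx n,
        ∑ p : PIdx n, A u.1 u.2 * pauliOp n p u.2 u.1 * (B v.1 v.2 * pauliOp n p v.2 v.1)
        = A u.1 u.2 * B v.1 v.2 * (if v = (u.2, u.1) then ((dim n : ℝ) : ℂ) else 0) := by
      intro v
      have := pauli_complete_entry u.2 u.1 v.2 v.1
      calc ∑ p : PIdx n, A u.1 u.2 * pauliOp n p u.2 u.1 * (B v.1 v.2 * pauliOp n p v.2 v.1)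
          = A u.1 u.2 * B v.1 v.2 * ∑ p : PIdx n, pauliOp n p u.2 u.1 * pauliOp n p v.2 v.1 := by
            rw [Finset.mul_sum]; exact Finset.sum_congr rfl fun p _ => by ring
        _ = A u.1 u.2 * B v.1 v.2 * (if v = (u.2, u.1) then ((dim n : ℝ) : ℂ) else 0) := by
            rw [this]
            congr 1
            refine if_congr ?_ rfl rfl
            rw [Prod.ext_iff]
            constructor
            · rintro ⟨h1, h2⟩; exact ⟨h1.symm, h2.symm⟩
            · rintro ⟨h1, h2⟩; exact ⟨h1.symm, h2.symm⟩
    simp_rw [this, mul_ite, mul_zero]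
    rw [Finset.sum_ite_eq' Finset.univ ((u.2, u.1)) (fun v => A u.1 u.2 * B v.1 v.2 * ((dim n : ℝ) : ℂ))]
    simp
  simp_rw [hcol]
  rw [Finset.mul_sum]
  exact Finset.sum_congr rfl fun u _ => by ring

lemma pauli_expand (B : Op n) :
    ∑ q : PIdx n, (B * pauliOp n q).trace • pauliOp n q = ((dim n : ℝ) : ℂ) • B := by
  ext x y
  simp only [Matrix.sum_apply, Matrix.smul_apply, smul_eq_mul, trace_mul_eq_sum]
  calc ∑ q : PIdx n, (∑ u : Idx n × Idx n, B u.1 u.2 * pauliOp n q u.2 u.1) * pauliOp n q x y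
      = ∑ u : Idx n × Idx n, B u.1 u.2 * ∑ q : PIdx n, pauliOp n q u.2 u.1 * pauliOp n q x y := by
        simp_rw [Finset.sum_mul]
        rw [Finset.sum_comm]
        refine Finset.sum_congr rfl fun u _ => ?_
        rw [Finset.mul_sum]
        exact Finset.sum_congr rfl fun q _ => by ring
    _ = ∑ u : Idx n × Idx n, B u.1 u.2 * (if u = (x, y) then ((dim n : ℝ) : ℂ) else 0) := by
        refine Finset.sum_congr rfl fun u _ => ?_
        rw [pauli_complete_entry]
        congr 1
        refine if_congr ?_ rfl rfl
        rw [Prod.ext_iff]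
        exact ⟨fun h => ⟨h.2, h.1⟩, fun h => ⟨h.2, h.1⟩⟩
    _ = ((dim n : ℝ) : ℂ) * B x y := by
        simp_rw [mul_ite, mul_zero]
        rw [Finset.sum_ite_eq' Finset.univ ((x, y)) (fun u => B u.1 u.2 * ((dim n : ℝ) : ℂ))]
        simp [mul_comm]

lemma pauli_twist (p q : PIdx n) :
    pauliOp n p * pauliOp n q * pauliOp n p = ((chi p q : ℝ) : ℂ) • pauliOp n q := by
  simp only [pauliOp_eq, tp_mul]
  simp only [p1_twist]
  rw [show (fun i => ((chi1 (p i) (q i) : ℝ) : ℂ) • pauli1 (q i))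
      = (fun i => (fun j => ((chi1 (p j) (q j) : ℝ) : ℂ)) i • (fun j => pauli1 (q j)) i) from rfl,
    tp_smul]
  congr 1
  rw [chi]
  push_cast
  rfl

lemma chi_orth (q q' : PIdx n) :
    ∑ p : PIdx n, chi p q * chi p q' = if q = q' then (dim n) ^ 2 else 0 := by
  have h : ∀ p : PIdx n, chi p q * chi p q'
      = ∏ i, chi1 (p i) (q i) * chi1 (p i) (q' i) := fun p => by
    rw [chi, chi, Finset.prod_mul_distrib]
  simp_rw [h]
  have hps := Fintype.prod_sum (κ := fun _ : Fin n => Fin 4)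
    (fun i a => chi1 a (q i) * chi1 a (q' i))
  rw [← hps]
  simp_rw [chi1_orth]
  by_cases hc : q = q'
  · rw [if_pos hc]
    subst hc
    simp only [if_pos rfl, Finset.prod_const, Finset.card_univ, Fintype.card_fun]
    rw [dim]
    rw [← pow_mul, mul_comm, pow_mul]
    norm_num
  · rw [if_neg hc]
    obtain ⟨i, hi⟩ := Function.ne_iff.mp hc
    exact Finset.prod_eq_zero (Finset.mem_univ i) (by rw [if_neg hi])

lemma twist_expand (A B : Op n) (p : PIdx n) :
    ((dim n : ℝ) : ℂ) * (A * pauliOp n p * B * pauliOp n p).trace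
      = ∑ q : PIdx n, ((chi p q : ℝ) : ℂ)
          * ((A * pauliOp n q).trace * (B * pauliOp n q).trace) := by
  have h2 : ((dim n : ℝ) : ℂ) • (A * pauliOp n p * B * pauliOp n p)
      = ∑ q : PIdx n, (B * pauliOp n q).trace
          • (((chi p q : ℝ) : ℂ) • (A * pauliOp n q)) := by
    calc ((dim n : ℝ) : ℂ) • (A * pauliOp n p * B * pauliOp n p)
        = A * pauliOp n p * (((dim n : ℝ) : ℂ) • B) * pauliOp n p := by
          rw [Matrix.mul_smul, Matrix.smul_mul]
      _ = A * pauliOp n p * (∑ q : PIdx n, (B * pauliOp n q).trace • pauliOp n q)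
            * pauliOp n p := by rw [pauli_expand]
      _ = ∑ q : PIdx n, (B * pauliOp n q).trace
            • (A * (pauliOp n p * pauliOp n q * pauliOp n p)) := by
          rw [Matrix.mul_sum, Matrix.sum_mul]
          refine Finset.sum_congr rfl fun q _ => ?_
          rw [Matrix.mul_smul, Matrix.smul_mul]
          congr 1
          noncomm_ring
      _ = ∑ q : PIdx n, (B * pauliOp n q).trace
            • (((chi p q : ℝ) : ℂ) • (A * pauliOp n q)) := by
          refine Finset.sum_congr rfl fun q _ => ?_
          rw [pauli_twist, Matrix.mul_smul]
  have h3 := congrArg Matrix.trace h2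
  rw [Matrix.trace_smul, Matrix.trace_sum] at h3
  simp only [Matrix.trace_smul] at h3
  rw [smul_eq_mul] at h3
  rw [h3]
  refine Finset.sum_congr rfl fun q _ => ?_
  simp [smul_eq_mul]
  ring

end NQubit

section Herm
variable {n : ℕ}

lemma trace_mul_real {A B : Op n} (hA : Aᴴ = A) (hB : Bᴴ = B) :
    (((A * B).trace.re : ℝ) : ℂ) = (A * B).trace := by
  have h : star ((A * B).trace) = (A * B).trace := by
    rw [← Matrix.trace_conjTranspose, Matrix.conjTranspose_mul, hA, hB, Matrix.trace_mul_comm]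
  exact Complex.conj_eq_iff_re.mp h

lemma ketbra_herm (φ : Idx n → ℂ) : (ketbra φ)ᴴ = ketbra φ := by
  ext x y
  simp [ketbra, Matrix.conjTranspose_apply, Matrix.vecMulVec_apply, mul_comm]

lemma trace_ketbra_mul (φ : Idx n → ℂ) (M : Op n) :
    (ketbra φ * M).trace = star φ ⬝ᵥ M.mulVec φ := by
  rw [trace_mul_eq_sum]
  simp only [ketbra, Matrix.vecMulVec_apply, dotProduct, Matrix.mulVec, Pi.star_apply]
  rw [Fintype.sum_prod_type]
  rw [Finset.sum_comm]
  simp_rw [Finset.mul_sum]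
  exact Finset.sum_congr rfl fun a _ => Finset.sum_congr rfl fun x _ => by ring

lemma ketbra_trace (φ : Idx n → ℂ) : (ketbra φ).trace = star φ ⬝ᵥ φ := by
  simp only [Matrix.trace, Matrix.diag, ketbra, Matrix.vecMulVec_apply, dotProduct,
    Pi.star_apply]
  exact Finset.sum_congr rfl fun x _ => by ring

lemma ketbra_mul_mul (φ : Idx n → ℂ) (M : Op n) :
    ketbra φ * M * ketbra φ = (ketbra φ * M).trace • ketbra φ := by
  ext x y
  rw [trace_ketbra_mul]
  simp only [Matrix.mul_apply, ketbra, Matrix.vecMulVec_apply, Matrix.smul_apply,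
    dotProduct, Matrix.mulVec, Pi.star_apply, smul_eq_mul,
    Finset.sum_mul, Finset.mul_sum]
  rw [Finset.sum_comm]
  exact Finset.sum_congr rfl fun a _ => Finset.sum_congr rfl fun b _ => by ring

end Herm

section CS
variable {n : ℕ}

lemma trace_conjTranspose_mul_re (A : Op n) :
    ((Aᴴ * A).trace).re = ∑ u : Idx n × Idx n, ‖A u.2 u.1‖ ^ 2 := by
  rw [trace_mul_eq_sum]
  rw [Complex.re_sum]
  refine Finset.sum_congr rfl fun u _ => ?_
  rw [Matrix.conjTranspose_apply]
  rw [show star (A u.2 u.1) * A u.2 u.1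
      = ((‖A u.2 u.1‖ ^ 2 : ℝ) : ℂ) by
    rw [Complex.star_def, mul_comm, Complex.mul_conj, Complex.normSq_eq_norm_sq]]
  exact Complex.ofReal_re _

lemma hs_cs (A B : Op n) :
    ‖(Aᴴ * B).trace‖ ^ 2 ≤ ((Aᴴ * A).trace).re * ((Bᴴ * B).trace).re := by
  rw [trace_conjTranspose_mul_re, trace_conjTranspose_mul_re, trace_mul_eq_sum]
  have h1 : ‖∑ u : Idx n × Idx n, Aᴴ u.1 u.2 * B u.2 u.1‖
      ≤ ∑ u : Idx n × Idx n, ‖A u.2 u.1‖ * ‖B u.2 u.1‖ := by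
    refine le_trans (norm_sum_le _ _) (le_of_eq ?_)
    refine Finset.sum_congr rfl fun u _ => ?_
    rw [norm_mul, Matrix.conjTranspose_apply, Complex.star_def, Complex.norm_conj]
  calc ‖∑ u : Idx n × Idx n, Aᴴ u.1 u.2 * B u.2 u.1‖ ^ 2
      ≤ (∑ u : Idx n × Idx n, ‖A u.2 u.1‖ * ‖B u.2 u.1‖) ^ 2 := by
        exact pow_le_pow_left₀ (norm_nonneg _) h1 2
    _ ≤ (∑ u : Idx n × Idx n, ‖A u.2 u.1‖ ^ 2)
          * ∑ u : Idx n × Idx n, ‖B u.2 u.1‖ ^ 2 :=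
        Finset.sum_mul_sq_le_sq_mul_sq _ _ _

open scoped MatrixOrder in
lemma psd_eq_star_mul {ρ : Op n} (h : ρ.PosSemidef) : ∃ B : Op n, ρ = star B * B :=
  CStarAlgebra.nonneg_iff_eq_star_mul_self.mp h.nonneg

lemma xiC_abs_sq_le_one {ρ : Op n} (hρ : IsDensity ρ) (p : PIdx n) :
    ‖(ρ * pauliOp n p).trace‖ ^ 2 ≤ 1 := by
  classical
  obtain ⟨hpsd, htr⟩ := hρ
  obtain ⟨s, hs⟩ := psd_eq_star_mul hpsd
  have h1 : sᴴ * (s * pauliOp n p) = ρ * pauliOp n p := by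
    rw [hs, star_eq_conjTranspose, mul_assoc]
  have h2 : sᴴ * s = ρ := by rw [hs, star_eq_conjTranspose]
  have h3 : ((s * pauliOp n p)ᴴ * (s * pauliOp n p)).trace = 1 := by
    rw [Matrix.conjTranspose_mul, pauliOp_herm]
    have : pauliOp n p * sᴴ * (s * pauliOp n p) = pauliOp n p * ρ * pauliOp n p := by
      rw [mul_assoc, ← mul_assoc sᴴ, h2, ← mul_assoc]
    rw [this, Matrix.trace_mul_cycle, pauliOp_mul_self, one_mul, htr]
  have hcs := hs_cs s (s * pauliOp n p)
  rw [h1, h2, h3, htr] at hcs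
  simpa using hcs

lemma purity_le_one' {ρ : Op n} (hρ : IsDensity ρ) : ((ρ * ρ).trace).re ≤ 1 := by
  classical
  obtain ⟨hpsd, htr⟩ := hρ
  have hH := hpsd.1
  set U : Op n := (Matrix.IsHermitian.eigenvectorUnitary hH : Op n) with hUdef
  have hU : star U * U = 1 :=
    Matrix.mem_unitaryGroup_iff'.mp (Matrix.IsHermitian.eigenvectorUnitary hH).2
  set D : Op n := Matrix.diagonal (RCLike.ofReal ∘ hH.eigenvalues) with hDdef
  have hspec : ρ = U * D * star U := hH.spectral_theorem
  have htrD : ∀ M : Op n, (U * M * star U).trace = M.trace := by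
    intro M
    rw [Matrix.trace_mul_cycle, hU, one_mul]
  have hρ2 : ρ * ρ = U * (D * D) * star U := by
    rw [hspec]
    calc U * D * star U * (U * D * star U) = U * (D * (star U * U) * D) * star U := by
          noncomm_ring
      _ = U * (D * D) * star U := by rw [hU, mul_one, ← mul_assoc]
  have hDD : (D * D).trace = ∑ i, ((hH.eigenvalues i : ℂ)) ^ 2 := by
    rw [hDdef, Matrix.diagonal_mul_diagonal, Matrix.trace_diagonal]
    exact Finset.sum_congr rfl fun i _ => by
      simp [Function.comp, pow_two]
  have htr2 : (ρ * ρ).trace = ∑ i, ((hH.eigenvalues i : ℂ)) ^ 2 := by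
    rw [hρ2, htrD, hDD]
  have htr1 : (1 : ℂ) = ∑ i, ((hH.eigenvalues i : ℂ)) := by
    conv_lhs => rw [← htr]
    conv_lhs => rw [hspec]
    rw [htrD, hDdef, Matrix.trace_diagonal]
    rfl
  have hsum1 : ∑ i, hH.eigenvalues i = 1 := by
    have := congrArg Complex.re htr1
    rw [Complex.re_sum] at this
    simp only [Complex.ofReal_re] at this
    simpa using this.symm
  have hre2 : ((ρ * ρ).trace).re = ∑ i, (hH.eigenvalues i) ^ 2 := by
    rw [htr2, Complex.re_sum]
    refine Finset.sum_congr rfl fun i _ => ?_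
    norm_cast
  rw [hre2]
  calc ∑ i, (hH.eigenvalues i) ^ 2 ≤ (∑ i, hH.eigenvalues i) ^ 2 :=
        Finset.sum_sq_le_sq_sum_of_nonneg fun i _ => hpsd.eigenvalues_nonneg i
    _ = 1 := by rw [hsum1]; norm_num

end CS

section TopSum

lemma weighted_le_exists_subset {ι : Type*} [Fintype ι] [DecidableEq ι] (w g : ι → ℝ) (k : ℕ)
    (hk : 0 < k) (hkc : k ≤ Fintype.card ι)
    (hw0 : ∀ i, 0 ≤ w i) (hw1 : ∀ i, w i ≤ 1) (hws : ∑ i, w i ≤ (k : ℝ))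
    (hg : ∀ i, 0 ≤ g i) :
    ∃ S : Finset ι, S.card = k ∧ ∑ i, w i * g i ≤ ∑ i ∈ S, g i := by
  have hne : (Finset.univ.powersetCard k : Finset (Finset ι)).Nonempty := by
    rw [Finset.powersetCard_nonempty]
    simpa using hkc
  obtain ⟨S, hSmem, hSmax⟩ := Finset.exists_max_image _ (fun T => ∑ i ∈ T, g i) hne
  rw [Finset.mem_powersetCard] at hSmem
  obtain ⟨hSsub, hScard⟩ := hSmem
  refine ⟨S, hScard, ?_⟩
  have hSne : S.Nonempty := Finset.card_pos.mp (by omega)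
  obtain ⟨i0, hi0S, hi0⟩ := Finset.exists_mem_eq_inf' hSne g
  have hmin : ∀ i ∈ S, S.inf' hSne g ≤ g i := fun i hi => Finset.inf'_le _ hi
  have hm0 : 0 ≤ S.inf' hSne g := hi0 ▸ hg i0
  have hout : ∀ j, j ∉ S → g j ≤ S.inf' hSne g := by
    intro j hj
    have hjne : j ∉ S.erase i0 := fun hmem => hj (Finset.mem_of_mem_erase hmem)
    have hT : (insert j (S.erase i0)) ∈ Finset.univ.powersetCard k := by
      rw [Finset.mem_powersetCard]
      refine ⟨fun x _ => Finset.mem_univ x, ?_⟩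
      rw [Finset.card_insert_of_notMem hjne, Finset.card_erase_of_mem hi0S, hScard]
      omega
    have hmax := hSmax _ hT
    rw [Finset.sum_insert hjne] at hmax
    have herase : g i0 + ∑ i ∈ S.erase i0, g i = ∑ i ∈ S, g i :=
      Finset.add_sum_erase _ _ hi0S
    rw [hi0]
    linarith
  have h1 : ∑ i ∈ S, w i * g i
      ≤ ∑ i ∈ S, g i - S.inf' hSne g * ∑ i ∈ S, (1 - w i) := by
    rw [Finset.mul_sum, ← Finset.sum_sub_distrib]
    refine Finset.sum_le_sum fun i hi => ?_
    have h := hmin i hi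
    nlinarith [hg i, hw0 i, hw1 i]
  have h2 : ∑ i ∈ Sᶜ, w i * g i ≤ S.inf' hSne g * ∑ i ∈ Sᶜ, w i := by
    rw [Finset.mul_sum]
    refine Finset.sum_le_sum fun i hi => ?_
    have h := hout i (Finset.mem_compl.mp hi)
    nlinarith [hw0 i]
  have hcard : ∑ i ∈ S, (1 - w i) = (k : ℝ) - ∑ i ∈ S, w i := by
    rw [Finset.sum_sub_distrib, Finset.sum_const, hScard]
    simp [nsmul_eq_mul]
  have hsw : ∑ i ∈ S, w i + ∑ i ∈ Sᶜ, w i = ∑ i, w i := Finset.sum_add_sum_compl S w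
  have hsplit : ∑ i, w i * g i = ∑ i ∈ S, w i * g i + ∑ i ∈ Sᶜ, w i * g i :=
    (Finset.sum_add_sum_compl S _).symm
  nlinarith [hm0, hws]

lemma le_topdSum {n : ℕ} (g : PIdx n → ℝ) {S : Finset (PIdx n)} (hS : S.card = 2 ^ n) :
    ∑ p ∈ S, g p ≤ topdSum g := by
  have hfin : ({x | ∃ S : Finset (PIdx n), S.card = 2 ^ n ∧ x = ∑ p ∈ S, g p} : Set ℝ).Finite := by
    have hsub : ({x | ∃ S : Finset (PIdx n), S.card = 2 ^ n ∧ x = ∑ p ∈ S, g p} : Set ℝ)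
        ⊆ (fun T : Finset (PIdx n) => ∑ p ∈ T, g p) '' Set.univ := by
      rintro x ⟨T, _, rfl⟩
      exact ⟨T, trivial, rfl⟩
    exact Set.Finite.subset (Set.finite_univ.image _) hsub
  exact le_csSup (Set.Finite.bddAbove hfin) ⟨S, hS, rfl⟩

end TopSum

section Scalar
variable {n : ℕ}

lemma dim_pos : 0 < dim n := by rw [dim]; positivity

lemma dim_ne_zero : (dim n) ≠ 0 := ne_of_gt dim_pos

lemma xiC_real {A : Op n} (hA : Aᴴ = A) (p : PIdx n) :
    ((XiC A p : ℝ) : ℂ) = (A * pauliOp n p).trace :=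
  trace_mul_real hA (pauliOp_herm p)

lemma cross_eq_re {A B : Op n} (hA : Aᴴ = A) (hB : Bᴴ = B) (p : PIdx n) :
    XiC A p * XiC B p = ((A * pauliOp n p).trace * (B * pauliOp n p).trace).re := by
  rw [← xiC_real hA p, ← xiC_real hB p, ← Complex.ofReal_mul, Complex.ofReal_re]

lemma sum_cross {A B : Op n} (hA : Aᴴ = A) (hB : Bᴴ = B) :
    ∑ p : PIdx n, XiC A p * XiC B p = dim n * ((A * B).trace).re := by
  have h := congrArg Complex.re (sum_trace_mul A B)
  rw [Complex.re_sum, Complex.re_ofReal_mul] at h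
  rw [← h]
  exact Finset.sum_congr rfl fun p _ => cross_eq_re hA hB p

lemma twist_re {A B : Op n} (hA : Aᴴ = A) (hB : Bᴴ = B) (p : PIdx n) :
    twistXi A B p = (dim n)⁻¹ * ∑ q, chi p q * (XiC A q * XiC B q) := by
  have h := congrArg Complex.re (twist_expand A B p)
  rw [Complex.re_ofReal_mul, Complex.re_sum] at h
  have hterm : ∀ q, (((chi p q : ℝ) : ℂ)
      * ((A * pauliOp n q).trace * (B * pauliOp n q).trace)).re
      = chi p q * (XiC A q * XiC B q) := by
    intro q
    rw [Complex.re_ofReal_mul, cross_eq_re hA hB]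
  simp_rw [hterm] at h
  have : twistXi A B p = ((A * pauliOp n p * B * pauliOp n p).trace).re := rfl
  rw [this, ← h, inv_mul_cancel_left₀ dim_ne_zero]

lemma twist_norm {A B : Op n} (hA : Aᴴ = A) (hB : Bᴴ = B) :
    ∑ p : PIdx n, (twistXi A B p) ^ 2 = ∑ q : PIdx n, (XiC A q * XiC B q) ^ 2 := by
  simp_rw [twist_re hA hB]
  have step1 : ∑ p : PIdx n, ((dim n)⁻¹ * ∑ q, chi p q * (XiC A q * XiC B q)) ^ 2
      = ((dim n)⁻¹) ^ 2 * ∑ p : PIdx n,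
          ∑ q, ∑ q', (chi p q * (XiC A q * XiC B q)) * (chi p q' * (XiC A q' * XiC B q')) := by
    rw [Finset.mul_sum]
    refine Finset.sum_congr rfl fun p _ => ?_
    rw [mul_pow]
    congr 1
    rw [pow_two, Finset.sum_mul_sum]
  rw [step1]
  have step2 : ∑ p : PIdx n,
      ∑ q, ∑ q', (chi p q * (XiC A q * XiC B q)) * (chi p q' * (XiC A q' * XiC B q'))
      = ∑ q, ∑ q', ((XiC A q * XiC B q) * (XiC A q' * XiC B q'))
          * ∑ p : PIdx n, chi p q * chi p q' := by
    rw [Finset.sum_comm]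
    refine Finset.sum_congr rfl fun q _ => ?_
    rw [Finset.sum_comm]
    refine Finset.sum_congr rfl fun q' _ => ?_
    rw [Finset.mul_sum]
    exact Finset.sum_congr rfl fun p _ => by ring
  rw [step2]
  have step3 : ∀ q : PIdx n, ∑ q', ((XiC A q * XiC B q) * (XiC A q' * XiC B q'))
      * ∑ p : PIdx n, chi p q * chi p q'
      = (XiC A q * XiC B q) ^ 2 * (dim n) ^ 2 := by
    intro q
    have : ∀ q' : PIdx n, ((XiC A q * XiC B q) * (XiC A q' * XiC B q'))
        * ∑ p : PIdx n, chi p q * chi p q'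
        = if q = q' then ((XiC A q * XiC B q) * (XiC A q' * XiC B q')) * (dim n) ^ 2
          else 0 := by
      intro q'
      rw [chi_orth]
      split_ifs <;> ring
    simp_rw [this]
    rw [Finset.sum_ite_eq Finset.univ q
      (fun q' => ((XiC A q * XiC B q) * (XiC A q' * XiC B q')) * (dim n) ^ 2)]
    simp [pow_two]
  simp_rw [step3]
  rw [← Finset.sum_mul]
  have hd := dim_ne_zero (n := n)
  field_simp

lemma xiK_eq_pExp (φ : Idx n → ℂ) (p : PIdx n) : XiC (ketbra φ) p = pExp φ p := by
  rw [XiC, trace_ketbra_mul]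
  rfl

end Scalar

end CrossChar

open CrossChar in
/-- cross characteristic functions for fidelity estimation. -/
theorem cross_char_fidelity (n : ℕ) (ρ : Op n) (hρ : IsDensity ρ)
    (φ : Idx n → ℂ) (hφ : star φ ⬝ᵥ φ = 1)
    (O : Op n) (hO : O = ketbra φ - ((dim n : ℂ))⁻¹ • (1 : Op n)) :
    (∑ p : PIdx n, twistXi ρ O p * crossXi ρ O p
        = (∑ p : PIdx n, twistXi ρ (ketbra φ) p * crossXi ρ (ketbra φ) p)
            - 2 * fid ρ φ + 1 / dim n)
    ∧ (∑ p : PIdx n, twistXi ρ O p * crossXi ρ O p ≤ ∑ p : PIdx n, (crossXi ρ O p) ^ 2)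
    ∧ (∑ p : PIdx n, (crossXi ρ O p) ^ 2
        = (∑ p : PIdx n, (crossXi ρ (ketbra φ) p) ^ 2) - 1)
    ∧ (∑ p : PIdx n, (crossXi ρ O p) ^ 2 < topdSum (fun p => (pExp φ p) ^ 2))
    ∧ (∑ p : PIdx n, twistXi (ketbra φ) (ketbra φ) p * crossXi (ketbra φ) (ketbra φ) p
        = ∑ p : PIdx n, (crossXi (ketbra φ) (ketbra φ) p) ^ 2)
    ∧ (∑ p : PIdx n, (crossXi (ketbra φ) (ketbra φ) p) ^ 2
        = (2 : ℝ) ^ (-(M2 φ)) * dim n) := by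
  classical
  set K := ketbra φ with hKdef
  have htrρ : ρ.trace = 1 := hρ.2
  have hρH : ρᴴ = ρ := hρ.1.1
  have hKH : Kᴴ = K := ketbra_herm φ
  have hOH : Oᴴ = O := by
    rw [hO, Matrix.conjTranspose_sub, ketbra_herm, Matrix.conjTranspose_smul,
      Matrix.conjTranspose_one, star_inv₀, Complex.star_def, Complex.conj_ofReal]
  have htrK : K.trace = 1 := by rw [hKdef, ketbra_trace, hφ]
  have hfid : ((ρ * K).trace).re = fid ρ φ := by
    rw [Matrix.trace_mul_comm, hKdef, trace_ketbra_mul]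
    rfl
  have hXiρ0 : XiC ρ (fun _ => 0) = 1 := by
    rw [XiC, pauliOp_zero, Matrix.mul_one, htrρ]
    simp
  have hXiK0 : XiC K (fun _ => 0) = 1 := by
    rw [XiC, pauliOp_zero, Matrix.mul_one, htrK]
    simp
  have hXiO : ∀ p, XiC O p = XiC K p - (if p = (fun _ => 0) then 1 else 0) := by
    intro p
    rw [XiC, XiC, hO, Matrix.sub_mul, Matrix.smul_mul, Matrix.one_mul,
      Matrix.trace_sub, Matrix.trace_smul, pauliOp_trace]
    by_cases hp : p = fun _ => 0
    · rw [if_pos hp, if_pos hp]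
      rw [smul_eq_mul, inv_mul_cancel₀ (by exact_mod_cast dim_ne_zero)]
      simp [Complex.sub_re]
    · rw [if_neg hp, if_neg hp]
      simp
  have ht : ∀ p, twistXi ρ O p = twistXi ρ K p - 1 / dim n := by
    intro p
    rw [twistXi, twistXi, hO]
    have hmat : ρ * pauliOp n p * (K - ((dim n : ℂ))⁻¹ • 1) * pauliOp n p
        = ρ * pauliOp n p * K * pauliOp n p - ((dim n : ℂ))⁻¹ • ρ := by
      rw [Matrix.mul_sub, Matrix.sub_mul]
      congr 1
      rw [Matrix.mul_smul, Matrix.mul_one, Matrix.smul_mul, Matrix.mul_assoc,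
        pauliOp_mul_self, Matrix.mul_one]
    rw [hmat, Matrix.trace_sub, Complex.sub_re, Matrix.trace_smul, htrρ]
    congr 1
    rw [smul_eq_mul, mul_one, ← Complex.ofReal_inv, Complex.ofReal_re, one_div]
  have hcross : ∀ p, crossXi ρ O p = crossXi ρ K p - (if p = (fun _ => 0) then 1 else 0) := by
    intro p
    rw [crossXi, crossXi, hXiO p]
    by_cases hp : p = fun _ => 0
    · rw [if_pos hp]
      subst hp
      rw [hXiρ0]
      ring
    · rw [if_neg hp]
      ring
  have htwist0 : twistXi ρ K (fun _ => 0) = fid ρ φ := by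
    rw [twistXi, pauliOp_zero, Matrix.mul_one, Matrix.mul_one, hfid]
  have hcK0 : crossXi ρ K (fun _ => 0) = 1 := by
    rw [crossXi, hXiρ0, hXiK0]
    ring
  have hsumK : ∑ p, crossXi ρ K p = dim n * fid ρ φ := by
    have h := sum_cross hρH hKH
    rw [hfid] at h
    exact h
  -- part 1
  have part1 : ∑ p : PIdx n, twistXi ρ O p * crossXi ρ O p
      = (∑ p : PIdx n, twistXi ρ K p * crossXi ρ K p) - 2 * fid ρ φ + 1 / dim n := by
    have hexp : ∀ p, twistXi ρ O p * crossXi ρ O p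
        = twistXi ρ K p * crossXi ρ K p - (1 / dim n) * crossXi ρ K p
          - (if p = (fun _ => 0) then twistXi ρ K p - 1 / dim n else 0) := by
      intro p
      rw [ht p, hcross p]
      by_cases hp : p = fun _ => 0
      · rw [if_pos hp, if_pos hp]; ring
      · rw [if_neg hp, if_neg hp]; ring
    rw [Finset.sum_congr rfl fun p _ => hexp p]
    rw [Finset.sum_sub_distrib, Finset.sum_sub_distrib]
    rw [Finset.sum_ite_eq' Finset.univ (fun _ => 0 : PIdx n)
      (fun p => twistXi ρ K p - 1 / dim n)]
    rw [if_pos (Finset.mem_univ _), htwist0, ← Finset.mul_sum, hsumK]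
    have hd := dim_ne_zero (n := n)
    field_simp
    ring
  -- part 3
  have part3 : ∑ p : PIdx n, (crossXi ρ O p) ^ 2
      = (∑ p : PIdx n, (crossXi ρ K p) ^ 2) - 1 := by
    have hexp : ∀ p, (crossXi ρ O p) ^ 2
        = (crossXi ρ K p) ^ 2
          - (if p = (fun _ => 0) then 2 * crossXi ρ K p - 1 else 0) := by
      intro p
      rw [hcross p]
      by_cases hp : p = fun _ => 0
      · rw [if_pos hp, if_pos hp]; ring
      · rw [if_neg hp, if_neg hp]; ring
    rw [Finset.sum_congr rfl fun p _ => hexp p, Finset.sum_sub_distrib]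
    rw [Finset.sum_ite_eq' Finset.univ (fun _ => 0 : PIdx n)
      (fun p => 2 * crossXi ρ K p - 1)]
    rw [if_pos (Finset.mem_univ _), hcK0]
    ring
  -- part 2
  have part2 : ∑ p : PIdx n, twistXi ρ O p * crossXi ρ O p
      ≤ ∑ p : PIdx n, (crossXi ρ O p) ^ 2 := by
    have hnorm : ∑ p : PIdx n, (twistXi ρ O p) ^ 2 = ∑ p : PIdx n, (crossXi ρ O p) ^ 2 := by
      have h := twist_norm hρH hOH
      simpa [crossXi] using h
    have hCS := Finset.sum_mul_sq_le_sq_mul_sq Finset.univ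
      (fun p : PIdx n => twistXi ρ O p) (fun p => crossXi ρ O p)
    have hpos : (0:ℝ) ≤ ∑ p : PIdx n, (crossXi ρ O p) ^ 2 :=
      Finset.sum_nonneg fun p _ => sq_nonneg _
    nlinarith [hCS, hnorm, hpos]
  -- part 4
  have hw1 : ∀ p : PIdx n, (XiC ρ p) ^ 2 ≤ 1 := by
    intro p
    have h1 := xiC_abs_sq_le_one hρ p
    have h2 : (XiC ρ p) ^ 2 ≤ ‖(ρ * pauliOp n p).trace‖ ^ 2 := by
      rw [XiC, ← sq_abs]
      exact pow_le_pow_left₀ (abs_nonneg _) (Complex.abs_re_le_norm _) 2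
    linarith
  have hwsum : ∑ p : PIdx n, (XiC ρ p) ^ 2 ≤ ((2 ^ n : ℕ) : ℝ) := by
    have h := sum_cross hρH hρH
    have hpur := purity_le_one' hρ
    calc ∑ p : PIdx n, (XiC ρ p) ^ 2 = ∑ p : PIdx n, XiC ρ p * XiC ρ p := by
          refine Finset.sum_congr rfl fun p _ => ?_
          rw [pow_two]
      _ = dim n * ((ρ * ρ).trace).re := h
      _ ≤ dim n * 1 := mul_le_mul_of_nonneg_left hpur dim_pos.le
      _ = ((2 ^ n : ℕ) : ℝ) := by rw [mul_one, dim]; push_cast; ring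
  have hcard : (2 ^ n : ℕ) ≤ Fintype.card (PIdx n) := by
    have : Fintype.card (PIdx n) = 4 ^ n := by
      rw [Fintype.card_fun]
      simp
    rw [this]
    exact Nat.pow_le_pow_left (by norm_num) n
  obtain ⟨S, hScard, hSle⟩ := weighted_le_exists_subset
    (fun p : PIdx n => (XiC ρ p) ^ 2) (fun p => (pExp φ p) ^ 2) (2 ^ n)
    (Nat.pow_pos (by norm_num)) hcard
    (fun i => sq_nonneg _) hw1 hwsum (fun i => sq_nonneg _)
  have part4 : ∑ p : PIdx n, (crossXi ρ O p) ^ 2 < topdSum (fun p => (pExp φ p) ^ 2) := by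
    rw [part3]
    have h1 : ∑ p : PIdx n, (crossXi ρ K p) ^ 2
        = ∑ p : PIdx n, (XiC ρ p) ^ 2 * (pExp φ p) ^ 2 := by
      refine Finset.sum_congr rfl fun p _ => ?_
      rw [crossXi, hKdef, xiK_eq_pExp, mul_pow]
    have h2 := le_topdSum (fun p => (pExp φ p) ^ 2) hScard
    linarith
  -- part 5
  have hcKK : ∀ p : PIdx n, crossXi K K p = (XiC K p) ^ 2 := by
    intro p
    rw [crossXi, pow_two]
  have part5 : ∀ p : PIdx n, twistXi K K p = crossXi K K p := by
    intro p
    have hmat : K * pauliOp n p * K * pauliOp n p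
        = ((K * pauliOp n p).trace) • (K * pauliOp n p) := by
      rw [hKdef, ketbra_mul_mul φ (pauliOp n p), Matrix.smul_mul]
    rw [twistXi, hmat, Matrix.trace_smul, smul_eq_mul, ← pow_two]
    rw [← xiC_real hKH, ← Complex.ofReal_pow, Complex.ofReal_re, hcKK]
  have part5s : ∑ p : PIdx n, twistXi K K p * crossXi K K p
      = ∑ p : PIdx n, (crossXi K K p) ^ 2 := by
    refine Finset.sum_congr rfl fun p _ => ?_
    rw [part5 p, pow_two]
  -- part 6
  have hpExp0 : pExp φ (fun _ => 0) = 1 := by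
    rw [pExp, pauliOp_zero, Matrix.one_mulVec, hφ]
    simp
  have hsum4 : ∑ p : PIdx n, (crossXi K K p) ^ 2 = ∑ p : PIdx n, (pExp φ p) ^ 4 := by
    refine Finset.sum_congr rfl fun p _ => ?_
    rw [hcKK, hKdef, xiK_eq_pExp]
    ring
  have hxpos : 0 < (dim n)⁻¹ * ∑ p : PIdx n, (pExp φ p) ^ 4 := by
    have h1 : (1:ℝ) ≤ ∑ p : PIdx n, (pExp φ p) ^ 4 := by
      have h := Finset.single_le_sum (f := fun p : PIdx n => (pExp φ p) ^ 4)
        (fun i _ => by positivity) (Finset.mem_univ (fun _ => 0 : PIdx n))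
      simpa [hpExp0] using h
    exact mul_pos (inv_pos.mpr dim_pos) (lt_of_lt_of_le one_pos h1)
  have part6 : ∑ p : PIdx n, (crossXi K K p) ^ 2 = (2 : ℝ) ^ (-(M2 φ)) * dim n := by
    rw [M2, neg_neg, Real.rpow_logb (by norm_num) (by norm_num) hxpos, hsum4]
    have hd := dim_ne_zero (n := n)
    field_simp
  exact ⟨part1, part2, part3, part4, part5s, part6⟩
end
end

section
/- Let μ be a unitary 2-design on the n-qubit Hilbert space, ρ a density operator, O a traceless Hermitian operator, and for 0 ≤ p ≤ 1 let ρ_p = (1−p)ρ + p·𝟙/d be the depolarized state. Then V*(O, ρ_p) = (1−p)²·V*(O, ρ). -/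
open MeasureTheory Matrix
open scoped BigOperators ENNReal Real ComplexConjugate ComplexOrder

noncomputable section

open ThriftyShadow
namespace ThriftyShadowAux

open ThriftyShadow Matrix MeasureTheory

variable {n : ℕ}

lemma sum_ket : ∑ a : Idx n, ket n a = (1 : Op n) := by
  ext x y
  by_cases h : x = y
  · simp [ket, Matrix.sum_apply, Matrix.single, Matrix.one_apply, h]
  · rw [Matrix.sum_apply, Matrix.one_apply, if_neg h]
    refine Finset.sum_eq_zero fun a _ => ?_
    simp only [ket, Matrix.single, Matrix.of_apply]
    rw [if_neg]
    rintro ⟨rfl, rfl⟩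
    exact h rfl

lemma trace_ket (a : Idx n) : (ket n a).trace = 1 := by
  simp [ket]

lemma tpow_mul {t : ℕ} (f g : Fin t → Op n) :
    tpow f * tpow g = tpow (fun i => f i * g i) := by
  ext x y
  show ∑ z : TIdx n t, (∏ i, f i (x i) (z i)) * ∏ i, g i (z i) (y i)
      = ∏ i, (f i * g i) (x i) (y i)
  calc ∑ z : TIdx n t, (∏ i, f i (x i) (z i)) * ∏ i, g i (z i) (y i)
      = ∑ z : TIdx n t, ∏ i, (f i (x i) (z i) * g i (z i) (y i)) := by
        simp_rw [Finset.prod_mul_distrib]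
    _ = ∏ i, ∑ w, f i (x i) w * g i w (y i) := by
        rw [← Fintype.piFinset_univ]
        exact Finset.sum_prod_piFinset Finset.univ fun i w => f i (x i) w * g i w (y i)
    _ = ∏ i, (f i * g i) (x i) (y i) := by simp [Matrix.mul_apply]

lemma trace_tpow {t : ℕ} (f : Fin t → Op n) :
    (tpow f).trace = ∏ i, (f i).trace := by
  show ∑ x : TIdx n t, ∏ i, f i (x i) (x i) = _
  rw [← Fintype.piFinset_univ]
  exact Finset.sum_prod_piFinset Finset.univ fun i w => f i w w



/-- the conjugated projector -/
def W (U : UG n) (a : Idx n) : Op n := (U : Op n)ᴴ * ket n a * (U : Op n)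

/-- the pointwise cross-moment matrix -/
def Gfun (U : UG n) (a b : Idx n) : TMat n 4 :=
  (tpow fun _ : Fin 4 => (U : Op n)ᴴ) * tpow ![ket n a, ket n a, ket n b, ket n b] *
    (tpow fun _ : Fin 4 => (U : Op n))

lemma hU1 (U : UG n) : (U : Op n)ᴴ * (U : Op n) = 1 := by
  rw [← Matrix.star_eq_conjTranspose]
  exact Unitary.star_mul_self_of_mem U.prop

lemma hU2 (U : UG n) : (U : Op n) * (U : Op n)ᴴ = 1 := by
  rw [← Matrix.star_eq_conjTranspose]
  exact Unitary.mul_star_self_of_mem U.prop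

lemma trace_Gfun_mul (U : UG n) (a b : Idx n) (g : Fin 4 → Op n) :
    (Gfun U a b * tpow g).trace
      = (W U a * g 0).trace * ((W U a * g 1).trace *
        ((W U b * g 2).trace * (W U b * g 3).trace)) := by
  rw [Gfun, tpow_mul, tpow_mul, tpow_mul, trace_tpow, Fin.prod_univ_four]
  simp only [Matrix.cons_val_zero, Matrix.cons_val_one, Matrix.head_cons, Matrix.cons_val_two,
    Matrix.tail_cons, Matrix.cons_val_three, Matrix.head_fin_const, W]
  ring

lemma sum_trace_W_mul (U : UG n) (A : Op n) :
    ∑ a : Idx n, (W U a * A).trace = A.trace := by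
  rw [← Matrix.trace_sum]
  congr 1
  calc ∑ a : Idx n, W U a * A
      = (U : Op n)ᴴ * ((∑ a : Idx n, ket n a) * ((U : Op n) * A)) := by
        rw [Finset.sum_mul, Finset.mul_sum]
        refine Finset.sum_congr rfl fun a _ => ?_
        rw [W, mul_assoc, mul_assoc]
    _ = A := by rw [sum_ket, one_mul, ← mul_assoc, hU1, one_mul]

lemma trace_W_one (U : UG n) (a : Idx n) : (W U a * 1).trace = 1 := by
  rw [mul_one, W, Matrix.trace_mul_cycle, hU2, one_mul, trace_ket]

lemma isCompact_unitary_set (n : ℕ) :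
    IsCompact ((Matrix.unitaryGroup (Idx n) ℂ) : Set (Op n)) := by
  have hbig : IsCompact (Set.univ.pi fun _ : Idx n =>
      Set.univ.pi fun _ : Idx n => Metric.closedBall (0 : ℂ) 1) :=
    isCompact_univ_pi fun _ => isCompact_univ_pi fun _ => isCompact_closedBall _ _
  refine IsCompact.of_isClosed_subset hbig ?_ ?_
  · have hset : ((Matrix.unitaryGroup (Idx n) ℂ) : Set (Op n))
        = ((fun M : Op n => star M * M) ⁻¹' {1}) ∩ ((fun M : Op n => M * star M) ⁻¹' {1}) := by
      ext M
      simpa using Unitary.mem_iff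
    rw [hset]
    exact ((isClosed_singleton.preimage ((continuous_star).matrix_mul continuous_id)).inter
      (isClosed_singleton.preimage (continuous_id.matrix_mul continuous_star)))
  · intro M hM
    have h1 : star M * M = 1 := Unitary.star_mul_self_of_mem hM
    intro i _ j _
    have hdiag : ∑ k : Idx n, Complex.normSq (M k j) = 1 := by
      have h2 := congrArg (fun N : Op n => N j j) h1
      simp only [Matrix.mul_apply, Matrix.star_apply, Matrix.one_apply_eq,
        Matrix.star_eq_conjTranspose, Matrix.conjTranspose_apply] at h2
      simp only [RCLike.star_def] at h2
      have h3 : ∑ k : Idx n, ((Complex.normSq (M k j) : ℝ) : ℂ) = 1 := by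
        rw [← h2]
        refine Finset.sum_congr rfl fun k _ => ?_
        rw [mul_comm, Complex.mul_conj]
      rw [← Complex.ofReal_sum] at h3
      exact_mod_cast h3
    have h4 : Complex.normSq (M i j) ≤ 1 := by
      rw [← hdiag]
      exact Finset.single_le_sum (f := fun k => Complex.normSq (M k j))
        (fun k _ => Complex.normSq_nonneg _) (Finset.mem_univ i)
    have h5 : ‖M i j‖ ≤ 1 := by
      have := Complex.sq_norm (M i j)
      have habs : ‖M i j‖ ^ 2 ≤ 1 := by rw [this]; exact h4
      have hnn : 0 ≤ ‖M i j‖ := norm_nonneg _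
      nlinarith
    simpa [Metric.mem_closedBall, dist_zero_right] using h5

instance (n : ℕ) : CompactSpace (UG n) :=
  isCompact_iff_compactSpace.mp (isCompact_unitary_set n)

instance (n : ℕ) : BorelSpace (UG n) := ⟨rfl⟩

set_option synthInstance.maxHeartbeats 1000000 in
lemma integrable_continuous (μ : Measure (UG n)) [IsProbabilityMeasure μ]
    {f : UG n → ℂ} (hf : Continuous f) : Integrable f μ :=
  hf.integrable_of_hasCompactSupport
    (IsCompact.of_isClosed_subset isCompact_univ (isClosed_tsupport f) (Set.subset_univ _))

lemma continuous_coe : Continuous fun U : UG n => (U : Op n) :=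
  continuous_subtype_val

lemma continuous_tpow_coe :
    Continuous fun U : UG n => tpow (fun _ : Fin 4 => (U : Op n)) := by
  refine continuous_matrix fun x y => ?_
  show Continuous fun U : UG n => ∏ i : Fin 4, (U : Op n) (x i) (y i)
  exact continuous_finset_prod _ fun i _ => continuous_coe.matrix_elem _ _

lemma continuous_tpow_coeH :
    Continuous fun U : UG n => tpow (fun _ : Fin 4 => (U : Op n)ᴴ) := by
  refine continuous_matrix fun x y => ?_
  show Continuous fun U : UG n => ∏ i : Fin 4, (U : Op n)ᴴ (x i) (y i)
  exact continuous_finset_prod _ fun i _ =>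
    (continuous_coe.matrix_conjTranspose).matrix_elem _ _

lemma continuous_Gfun (a b : Idx n) : Continuous fun U : UG n => Gfun U a b :=
  (continuous_tpow_coeH.matrix_mul continuous_const).matrix_mul continuous_tpow_coe

lemma integrable_Gfun_entry (μ : Measure (UG n)) [IsProbabilityMeasure μ]
    (a b : Idx n) (c : ℂ) (i j : TIdx n 4) :
    Integrable (fun U : UG n => (Gfun U a b) i j * c) μ :=
  integrable_continuous μ (((continuous_Gfun a b).matrix_elem i j).mul continuous_const)

lemma integrable_trace_Gfun_mul (μ : Measure (UG n)) [IsProbabilityMeasure μ]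
    (a b : Idx n) (M : TMat n 4) :
    Integrable (fun U : UG n => (Gfun U a b * M).trace) μ := by
  refine integrable_continuous μ ?_
  have : Continuous fun U : UG n => Gfun U a b * M :=
    (continuous_Gfun a b).matrix_mul continuous_const
  show Continuous fun U : UG n => ∑ i, (Gfun U a b * M) i i
  exact continuous_finset_sum _ fun i _ => this.matrix_elem _ _

lemma trace_mul_expand (A M : TMat n 4) : (A * M).trace = ∑ i, ∑ j, A i j * M j i := by
  simp [Matrix.trace, Matrix.diag, Matrix.mul_apply]

lemma sum_swap4 {α β : Type*} [Fintype α] [Fintype β] (f : α → α → β → β → ℂ) :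
    ∑ i, ∑ j, ∑ a, ∑ b, f i j a b = ∑ a, ∑ b, ∑ i, ∑ j, f i j a b := by
  calc ∑ i, ∑ j, ∑ a, ∑ b, f i j a b
      = ∑ i, ∑ a, ∑ j, ∑ b, f i j a b :=
        Finset.sum_congr rfl fun i _ => Finset.sum_comm
    _ = ∑ a, ∑ i, ∑ j, ∑ b, f i j a b := Finset.sum_comm
    _ = ∑ a, ∑ i, ∑ b, ∑ j, f i j a b :=
        Finset.sum_congr rfl fun a _ => Finset.sum_congr rfl fun i _ => Finset.sum_comm
    _ = ∑ a, ∑ b, ∑ i, ∑ j, f i j a b :=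
        Finset.sum_congr rfl fun a _ => Finset.sum_comm

lemma trace_Omega_mul (μ : Measure (UG n)) [IsProbabilityMeasure μ] (M : TMat n 4) :
    (Omega μ (fun U => (U : Op n)) * M).trace
      = ∑ a : Idx n, ∑ b : Idx n, ∫ U : UG n, (Gfun U a b * M).trace ∂μ := by
  have hOm : ∀ i j, Omega μ (fun U => (U : Op n)) i j
      = ∑ a : Idx n, ∑ b : Idx n, ∫ U, (Gfun U a b) i j ∂μ := fun i j => rfl
  rw [trace_mul_expand]
  simp_rw [hOm, Finset.sum_mul]
  rw [sum_swap4 (f := fun i j a b => (∫ U, (Gfun U a b) i j ∂μ) * M j i)]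
  refine Finset.sum_congr rfl fun a _ => Finset.sum_congr rfl fun b _ => ?_
  symm
  simp_rw [trace_mul_expand]
  rw [integral_finset_sum _ (fun i _ => integrable_finset_sum _
    (fun j _ => integrable_Gfun_entry μ a b (M j i) i j))]
  refine Finset.sum_congr rfl fun i _ => ?_
  rw [integral_finset_sum _ (fun j _ => integrable_Gfun_entry μ a b (M j i) i j)]
  exact Finset.sum_congr rfl fun j _ => MeasureTheory.integral_mul_const (M j i) _

lemma vanish1 (μ : Measure (UG n)) [IsProbabilityMeasure μ] (O A : Op n)
    (hO0 : O.trace = 0) :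
    (Omega μ (fun U => (U : Op n)) * tpow ![O, 1, O, A]).trace = 0 := by
  rw [trace_Omega_mul]
  have hswap : ∀ a : Idx n, ∑ b : Idx n, ∫ U, (Gfun U a b * tpow ![O, 1, O, A]).trace ∂μ
      = ∫ U, ∑ b : Idx n, (Gfun U a b * tpow ![O, 1, O, A]).trace ∂μ := fun a =>
    (integral_finset_sum _ (fun b _ => integrable_trace_Gfun_mul μ a b _)).symm
  simp_rw [hswap]
  rw [← integral_finset_sum _ (fun a _ => integrable_finset_sum _
    (fun b _ => integrable_trace_Gfun_mul μ a b _))]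
  have hzero : ∀ U : UG n,
      ∑ a : Idx n, ∑ b : Idx n, (Gfun U a b * tpow ![O, 1, O, A]).trace = 0 := by
    intro U
    simp_rw [trace_Gfun_mul]
    simp only [Matrix.cons_val_zero, Matrix.cons_val_one, Matrix.head_cons, Matrix.cons_val_two,
      Matrix.tail_cons, Matrix.cons_val_three, Matrix.head_fin_const]
    simp_rw [trace_W_one, one_mul, ← Finset.mul_sum]
    rw [← Finset.sum_mul, sum_trace_W_mul, hO0, zero_mul]
  simp_rw [hzero]
  simp

lemma vanish3 (μ : Measure (UG n)) [IsProbabilityMeasure μ] (O A : Op n)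
    (hO0 : O.trace = 0) :
    (Omega μ (fun U => (U : Op n)) * tpow ![O, A, O, 1]).trace = 0 := by
  rw [trace_Omega_mul]
  have hswap : ∀ a : Idx n, ∑ b : Idx n, ∫ U, (Gfun U a b * tpow ![O, A, O, 1]).trace ∂μ
      = ∫ U, ∑ b : Idx n, (Gfun U a b * tpow ![O, A, O, 1]).trace ∂μ := fun a =>
    (integral_finset_sum _ (fun b _ => integrable_trace_Gfun_mul μ a b _)).symm
  simp_rw [hswap]
  rw [← integral_finset_sum _ (fun a _ => integrable_finset_sum _
    (fun b _ => integrable_trace_Gfun_mul μ a b _))]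
  have hzero : ∀ U : UG n,
      ∑ a : Idx n, ∑ b : Idx n, (Gfun U a b * tpow ![O, A, O, 1]).trace = 0 := by
    intro U
    simp_rw [trace_Gfun_mul]
    simp only [Matrix.cons_val_zero, Matrix.cons_val_one, Matrix.head_cons, Matrix.cons_val_two,
      Matrix.tail_cons, Matrix.cons_val_three, Matrix.head_fin_const]
    simp_rw [trace_W_one, mul_one, ← Finset.mul_sum, sum_trace_W_mul, hO0, mul_zero]
    simp
  simp_rw [hzero]
  simp

lemma tpow_expand (O ρ : Op n) (c c' : ℂ) :
    tpow ![O, c • ρ + c' • 1, O, c • ρ + c' • 1]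
      = (c * c) • tpow ![O, ρ, O, ρ] + (c * c') • tpow ![O, ρ, O, 1]
        + (c' * c) • tpow ![O, 1, O, ρ] + (c' * c') • tpow ![O, 1, O, 1] := by
  ext x y
  simp only [tpow, Matrix.add_apply, Matrix.smul_apply, Matrix.of_apply, smul_eq_mul,
    Fin.prod_univ_four, Matrix.cons_val_zero, Matrix.cons_val_one, Matrix.head_cons,
    Matrix.cons_val_two, Matrix.tail_cons, Matrix.cons_val_three, Matrix.head_fin_const]
  ring

end ThriftyShadowAux

open ThriftyShadowAux in
/-- effect of depolarizing noise on the reuse variance. -/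
theorem reuse_variance_depolarized (n : ℕ)
    (μ ν : Measure (UG n)) [IsProbabilityMeasure μ]
    (hν : IsHaar ν) (hμν : IsTDesign 2 μ ν)
    (ρ O : Op n) (hρ : IsDensity ρ) (hO : O.IsHermitian) (hO0 : O.trace = 0)
    (p : ℝ) (hp0 : 0 ≤ p) (hp1 : p ≤ 1) :
    VstarU μ O (((1 - p : ℝ) : ℂ) • ρ + ((p / dim n : ℝ) : ℂ) • (1 : Op n))
      = (1 - p) ^ 2 * VstarU μ O ρ := by
  have h1 : (Omega μ (fun U => (U : Op n)) *
        tpow ![O, ((1 - p : ℝ) : ℂ) • ρ + ((p / dim n : ℝ) : ℂ) • 1, O,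
          ((1 - p : ℝ) : ℂ) • ρ + ((p / dim n : ℝ) : ℂ) • 1]).trace
      = (((1 - p : ℝ) : ℂ) * ((1 - p : ℝ) : ℂ)) *
        (Omega μ (fun U => (U : Op n)) * tpow ![O, ρ, O, ρ]).trace := by
    rw [tpow_expand]
    rw [Matrix.mul_add, Matrix.mul_add, Matrix.mul_add, Matrix.trace_add, Matrix.trace_add,
      Matrix.trace_add]
    rw [Matrix.mul_smul, Matrix.mul_smul, Matrix.mul_smul, Matrix.mul_smul]
    rw [Matrix.trace_smul, Matrix.trace_smul, Matrix.trace_smul, Matrix.trace_smul]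
    rw [vanish3 μ O ρ hO0, vanish1 μ O ρ hO0, vanish3 μ O 1 hO0]
    simp [smul_eq_mul]
  have h2 : (O * (((1 - p : ℝ) : ℂ) • ρ + ((p / dim n : ℝ) : ℂ) • 1)).trace
      = ((1 - p : ℝ) : ℂ) * (O * ρ).trace := by
    rw [Matrix.mul_add, Matrix.mul_smul, Matrix.mul_smul, Matrix.trace_add, Matrix.trace_smul,
      Matrix.trace_smul, mul_one, hO0]
    simp [smul_eq_mul]
  simp only [VstarU, Vstar]
  rw [h1, h2]
  have h3 : (((dim n + 1 : ℝ) : ℂ)) ^ 2 *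
        ((((1 - p : ℝ) : ℂ) * ((1 - p : ℝ) : ℂ)) *
          (Omega μ (fun U => (U : Op n)) * tpow ![O, ρ, O, ρ]).trace)
        - (((1 - p : ℝ) : ℂ) * (O * ρ).trace) ^ 2
      = ((((1 - p) ^ 2 : ℝ)) : ℂ) *
        ((((dim n + 1 : ℝ) : ℂ)) ^ 2 *
          (Omega μ (fun U => (U : Op n)) * tpow ![O, ρ, O, ρ]).trace - ((O * ρ).trace) ^ 2) := by
    push_cast
    ring
  rw [h3, Complex.re_ofReal_mul]
end
end
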